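/- arXiv:1506.08910 — 5 statements merged into one kernel-verified Lean document; each statement's English description precedes it below -/
import Mathlib

section
/- Let e ∈ ℝ^d satisfy ‖e‖₀ ≤ m and ‖e‖₂ ≤ ε, and let x be a standard Gaussian vector in ℝ^d. Then for every δ ∈ (0,1), with probability at least 1 − δ, |⟨e, x⟩| ≤ ε·√m·(√(log(2d)) + √(2·log(2/δ))). -/
open MeasureTheory ProbabilityTheory

open Real
open scoped NNReal ENNReal

lemma exp_mul_gaussianPDFReal (c x : ℝ) :
    gaussianPDFReal 0 1 x * Real.exp (c * x) =
      Real.exp (c ^ 2 / 2) * gaussianPDFReal c 1 x := by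
  simp only [gaussianPDFReal, NNReal.coe_one, mul_one, sub_zero]
  have h : Real.exp (-x ^ 2 / 2) * Real.exp (c * x)
      = Real.exp (c ^ 2 / 2) * Real.exp (-(x - c) ^ 2 / 2) := by
    rw [← Real.exp_add, ← Real.exp_add]; congr 1; ring
  calc (√(2 * π))⁻¹ * rexp (-x ^ 2 / 2) * rexp (c * x)
      = (√(2 * π))⁻¹ * (rexp (-x ^ 2 / 2) * rexp (c * x)) := by ring
    _ = (√(2 * π))⁻¹ * (rexp (c ^ 2 / 2) * rexp (-(x - c) ^ 2 / 2)) := by rw [h]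
    _ = rexp (c ^ 2 / 2) * ((√(2 * π))⁻¹ * rexp (-(x - c) ^ 2 / 2)) := by ring

lemma integrable_exp_mul_gaussianReal (c : ℝ) :
    Integrable (fun x => Real.exp (c * x)) (gaussianReal 0 1) := by
  rw [gaussianReal_of_var_ne_zero 0 one_ne_zero, gaussianPDF_def]
  have hmeas : Measurable fun x => Real.toNNReal (gaussianPDFReal 0 1 x) :=
    (measurable_gaussianPDFReal 0 1).real_toNNReal
  rw [show (fun x => ENNReal.ofReal (gaussianPDFReal 0 1 x))
      = fun x => ((Real.toNNReal (gaussianPDFReal 0 1 x) : ℝ≥0) : ℝ≥0∞) from rfl,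
    integrable_withDensity_iff_integrable_smul hmeas]
  have h : (fun x => Real.toNNReal (gaussianPDFReal 0 1 x) • Real.exp (c * x)) =
      fun x => Real.exp (c ^ 2 / 2) * gaussianPDFReal c 1 x := by
    funext x
    rw [NNReal.smul_def, smul_eq_mul, Real.coe_toNNReal _ (gaussianPDFReal_nonneg 0 1 x),
      exp_mul_gaussianPDFReal]
  rw [h]
  exact (integrable_gaussianPDFReal c 1).const_mul _

lemma integral_exp_mul_gaussianReal (c : ℝ) :
    ∫ x, Real.exp (c * x) ∂(gaussianReal 0 1) = Real.exp (c ^ 2 / 2) := by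
  rw [gaussianReal_of_var_ne_zero 0 one_ne_zero, gaussianPDF_def]
  have hmeas : Measurable fun x => Real.toNNReal (gaussianPDFReal 0 1 x) :=
    (measurable_gaussianPDFReal 0 1).real_toNNReal
  rw [show (fun x => ENNReal.ofReal (gaussianPDFReal 0 1 x))
      = fun x => ((Real.toNNReal (gaussianPDFReal 0 1 x) : ℝ≥0) : ℝ≥0∞) from rfl,
    integral_withDensity_eq_integral_smul hmeas]
  have h : (fun x => Real.toNNReal (gaussianPDFReal 0 1 x) • Real.exp (c * x)) =
      fun x => Real.exp (c ^ 2 / 2) * gaussianPDFReal c 1 x := by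
    funext x
    rw [NNReal.smul_def, smul_eq_mul, Real.coe_toNNReal _ (gaussianPDFReal_nonneg 0 1 x),
      exp_mul_gaussianPDFReal]
  rw [h, MeasureTheory.integral_const_mul, integral_gaussianPDFReal_eq_one c one_ne_zero, mul_one]

/-- The standard Gaussian measure on ℝ^d: coordinates are i.i.d. N(0,1). -/
noncomputable def stdGaussian (d : ℕ) : Measure (Fin d → ℝ) :=
  Measure.pi fun _ => gaussianReal 0 1

lemma integrable_exp_mul_sum_stdGaussian (d : ℕ) (e : Fin d → ℝ) (s : ℝ) :
    Integrable (fun x : Fin d → ℝ => Real.exp (s * ∑ i, e i * x i)) (stdGaussian d) := by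
  letI : MeasureSpace ℝ := ⟨gaussianReal 0 1⟩
  haveI : SigmaFinite (volume : Measure ℝ) := by
    change SigmaFinite (gaussianReal 0 1); infer_instance
  have h : (fun x : Fin d → ℝ => Real.exp (s * ∑ i, e i * x i)) =
      fun x => ∏ i, Real.exp (s * e i * x i) := by
    funext x
    rw [← Real.exp_sum, Finset.mul_sum]
    congr 1
    exact Finset.sum_congr rfl fun i _ => by ring
  rw [h]
  exact Integrable.fintype_prod (f := fun i x => Real.exp (s * e i * x))
    (fun i => _root_.integrable_exp_mul_gaussianReal _)

lemma integral_exp_mul_sum_stdGaussian (d : ℕ) (e : Fin d → ℝ) (s : ℝ) :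
    ∫ x, Real.exp (s * ∑ i, e i * x i) ∂(stdGaussian d)
      = Real.exp (s ^ 2 * (∑ i, e i ^ 2) / 2) := by
  letI : MeasureSpace ℝ := ⟨gaussianReal 0 1⟩
  haveI : SigmaFinite (volume : Measure ℝ) := by
    change SigmaFinite (gaussianReal 0 1); infer_instance
  have h : (fun x : Fin d → ℝ => Real.exp (s * ∑ i, e i * x i)) =
      fun x => ∏ i, Real.exp (s * e i * x i) := by
    funext x
    rw [← Real.exp_sum, Finset.mul_sum]
    congr 1
    exact Finset.sum_congr rfl fun i _ => by ring
  rw [show stdGaussian d = (volume : Measure (Fin d → ℝ)) from rfl, h,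
    MeasureTheory.volume_pi, MeasureTheory.integral_fintype_prod_eq_prod
      (f := fun i x => Real.exp (s * e i * x))]
  have h2 : ∀ i : Fin d, ∫ x : ℝ, Real.exp (s * e i * x) = Real.exp ((s * e i) ^ 2 / 2) :=
    fun i => integral_exp_mul_gaussianReal (s * e i)
  rw [Finset.prod_congr rfl fun i _ => h2 i, ← Real.exp_sum]
  congr 1
  rw [← Finset.sum_div, Finset.mul_sum]
  congr 1
  exact Finset.sum_congr rfl fun i _ => by ring

lemma stdGaussian_tail (d : ℕ) (e : Fin d → ℝ) {t0 : ℝ} (ht0 : 0 ≤ t0)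
    (hv : 0 < ∑ i, e i ^ 2) :
    (stdGaussian d {x | t0 ≤ ∑ i, e i * x i}).toReal
      ≤ Real.exp (-(t0 ^ 2) / (2 * ∑ i, e i ^ 2)) := by
  haveI hP : IsProbabilityMeasure (stdGaussian d) := by
    unfold _root_.stdGaussian; infer_instance
  set v := ∑ i, e i ^ 2 with hvdef
  set s := t0 / v with hsdef
  have hs : 0 ≤ s := div_nonneg ht0 hv.le
  have h := measure_ge_le_exp_mul_mgf (t := s) (μ := stdGaussian d)
    (X := fun x : Fin d → ℝ => ∑ i, e i * x i) t0 hs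
    (integrable_exp_mul_sum_stdGaussian d e s)
  have hmgf : mgf (fun x : Fin d → ℝ => ∑ i, e i * x i) (stdGaussian d) s
      = Real.exp (s ^ 2 * v / 2) := integral_exp_mul_sum_stdGaussian d e s
  rw [hmgf, ← Real.exp_add] at h
  refine h.trans (le_of_eq ?_)
  congr 1
  have hv' : v ≠ 0 := ne_of_gt hv
  rw [hsdef]
  field_simp
  ring

/-- Let e ∈ ℝ^d satisfy ‖e‖₀ ≤ m and ‖e‖₂ ≤ ε, and let x be a standard
Gaussian vector in ℝ^d. Then for every δ ∈ (0,1), with probability at least 1 − δ,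
|⟨e, x⟩| ≤ ε·√m·(√(log(2d)) + √(2·log(2/δ))). -/
theorem inner_stdGaussian_sparse_bound
    (d m : ℕ) (e : Fin d → ℝ) (ε : ℝ)
    (he0 : (Finset.univ.filter fun i => e i ≠ 0).card ≤ m)
    (he2 : Real.sqrt (∑ i, (e i) ^ 2) ≤ ε)
    (δ : ℝ) (hδ : δ ∈ Set.Ioo (0 : ℝ) 1) :
    ENNReal.ofReal (1 - δ) ≤
      stdGaussian d {x | |∑ i, e i * x i| ≤
        ε * Real.sqrt m * (Real.sqrt (Real.log (2 * d)) + Real.sqrt (2 * Real.log (2 / δ)))} := by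
  obtain ⟨hδ0, hδ1⟩ := hδ
  haveI hP : IsProbabilityMeasure (stdGaussian d) := by unfold _root_.stdGaussian; infer_instance
  have hv0 : 0 ≤ ∑ i, (e i) ^ 2 := Finset.sum_nonneg fun i _ => sq_nonneg _
  have hε0 : 0 ≤ ε := (Real.sqrt_nonneg _).trans he2
  set T := ε * Real.sqrt m * (Real.sqrt (Real.log (2 * d)) + Real.sqrt (2 * Real.log (2 / δ)))
    with hTdef
  have hT0 : 0 ≤ T := by positivity
  by_cases hv : (∑ i, (e i) ^ 2) = 0
  · have he : ∀ i ∈ Finset.univ, e i = 0 := fun i _ => by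
      have := (Finset.sum_eq_zero_iff_of_nonneg (fun i _ => sq_nonneg (e i))).mp hv i
        (Finset.mem_univ i)
      exact pow_eq_zero_iff (two_ne_zero) |>.mp this
    have hset : {x : Fin d → ℝ | |∑ i, e i * x i| ≤ T} = Set.univ := by
      ext x
      simp only [Set.mem_setOf_eq, Set.mem_univ, iff_true]
      rw [Finset.sum_eq_zero fun i hi => by rw [he i hi, zero_mul]]
      simpa using hT0
    rw [hset, measure_univ]
    exact ENNReal.ofReal_le_one.mpr (by linarith)
  have hvpos : 0 < ∑ i, (e i) ^ 2 := lt_of_le_of_ne hv0 (Ne.symm hv)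
  have hεpos : 0 < ε := lt_of_lt_of_le (Real.sqrt_pos.mpr hvpos) he2
  have hvε : (∑ i, (e i) ^ 2) ≤ ε ^ 2 := by
    nlinarith [Real.sq_sqrt hv0, Real.sqrt_nonneg (∑ i, (e i) ^ 2)]
  have hm1 : 1 ≤ (m : ℝ) := by
    have hne : (Finset.univ.filter fun i => e i ≠ 0).Nonempty := by
      by_contra hne
      rw [Finset.not_nonempty_iff_eq_empty, Finset.filter_eq_empty_iff] at hne
      exact hv (Finset.sum_eq_zero fun i hi => by
        have := hne (Finset.mem_univ i); push_neg at this; simp [this])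
    have h1 : 1 ≤ (Finset.univ.filter fun i => e i ≠ 0).card := Finset.card_pos.mpr hne
    exact_mod_cast h1.trans he0
  have hm : 1 ≤ Real.sqrt m := by
    rw [show (1 : ℝ) = Real.sqrt 1 from Real.sqrt_one.symm]
    exact Real.sqrt_le_sqrt hm1
  have hlog : 0 < Real.log (2 / δ) := Real.log_pos (by rw [lt_div_iff₀ hδ0]; linarith)
  set t0 := ε * Real.sqrt (2 * Real.log (2 / δ)) with ht0def
  have hsq : Real.sqrt (2 * Real.log (2 / δ)) ^ 2 = 2 * Real.log (2 / δ) :=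
    Real.sq_sqrt (by linarith)
  have ht0pos : 0 < t0 := by
    apply mul_pos hεpos
    apply Real.sqrt_pos.mpr; linarith
  have ht0T : t0 ≤ T := by
    have h1 : 0 ≤ Real.sqrt (Real.log (2 * d)) := Real.sqrt_nonneg _
    have h2 : 0 ≤ Real.sqrt (2 * Real.log (2 / δ)) := Real.sqrt_nonneg _
    rw [hTdef, ht0def]
    nlinarith [mul_nonneg (mul_nonneg hε0 (sub_nonneg.mpr hm)) h2,
      mul_nonneg (mul_nonneg hε0 (le_trans zero_le_one hm)) h1]
  have key : ∀ f : Fin d → ℝ, (∑ i, f i ^ 2) = (∑ i, (e i) ^ 2) →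
      stdGaussian d {x | t0 ≤ ∑ i, f i * x i} ≤ ENNReal.ofReal (δ / 2) := by
    intro f hf
    have h := stdGaussian_tail d f ht0pos.le (hf ▸ hvpos)
    rw [hf] at h
    have ht0sq : t0 ^ 2 = ε ^ 2 * (2 * Real.log (2 / δ)) := by
      rw [ht0def, mul_pow, hsq]
    have hexp : Real.exp (-(t0 ^ 2) / (2 * ∑ i, (e i) ^ 2)) ≤ δ / 2 := by
      have h1 : Real.log (2 / δ) ≤ t0 ^ 2 / (2 * ∑ i, (e i) ^ 2) := by
        rw [le_div_iff₀ (by positivity), ht0sq]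
        nlinarith
      calc Real.exp (-(t0 ^ 2) / (2 * ∑ i, (e i) ^ 2))
          ≤ Real.exp (-Real.log (2 / δ)) := by
            apply Real.exp_le_exp.mpr
            rw [neg_div]
            linarith
        _ = δ / 2 := by
            rw [Real.exp_neg, Real.exp_log (by positivity), inv_div]
    calc stdGaussian d {x | t0 ≤ ∑ i, f i * x i}
        = ENNReal.ofReal ((stdGaussian d {x | t0 ≤ ∑ i, f i * x i}).toReal) :=
          (ENNReal.ofReal_toReal (measure_ne_top _ _)).symm
      _ ≤ ENNReal.ofReal (δ / 2) := ENNReal.ofReal_le_ofReal (h.trans hexp)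
  have hSmeas : Measurable fun x : Fin d → ℝ => ∑ i, e i * x i :=
    Finset.measurable_sum _ fun i _ => by fun_prop
  have hA : MeasurableSet {x : Fin d → ℝ | |∑ i, e i * x i| ≤ T} :=
    measurableSet_le hSmeas.abs measurable_const
  have key2 : stdGaussian d {x : Fin d → ℝ | t0 ≤ ∑ i, -(e i * x i)} ≤ ENNReal.ofReal (δ / 2) := by
    have := key (fun i => -e i) (by simp)
    simpa [neg_mul] using this
  have hsub : {x : Fin d → ℝ | |∑ i, e i * x i| ≤ T}ᶜ ⊆
      {x : Fin d → ℝ | t0 ≤ ∑ i, e i * x i} ∪ {x : Fin d → ℝ | t0 ≤ ∑ i, -(e i * x i)} := by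
    intro x hx
    simp only [Set.mem_compl_iff, Set.mem_setOf_eq, not_le] at hx
    have habs : t0 < |∑ i, e i * x i| := lt_of_le_of_lt ht0T hx
    rcases lt_abs.mp habs with h | h
    · exact Or.inl h.le
    · refine Or.inr ?_
      simp only [Set.mem_setOf_eq]
      rw [Finset.sum_neg_distrib]
      linarith
  have hcomp : stdGaussian d {x : Fin d → ℝ | |∑ i, e i * x i| ≤ T}ᶜ ≤ ENNReal.ofReal δ := by
    calc stdGaussian d {x : Fin d → ℝ | |∑ i, e i * x i| ≤ T}ᶜ
        ≤ stdGaussian d ({x : Fin d → ℝ | t0 ≤ ∑ i, e i * x i}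
            ∪ {x : Fin d → ℝ | t0 ≤ ∑ i, -(e i * x i)}) := measure_mono hsub
      _ ≤ stdGaussian d {x : Fin d → ℝ | t0 ≤ ∑ i, e i * x i}
            + stdGaussian d {x : Fin d → ℝ | t0 ≤ ∑ i, -(e i * x i)} := measure_union_le _ _
      _ ≤ ENNReal.ofReal (δ / 2) + ENNReal.ofReal (δ / 2) := add_le_add (key e rfl) key2
      _ = ENNReal.ofReal δ := by
          rw [← ENNReal.ofReal_add (by linarith) (by linarith)]
          norm_num
  have htot : stdGaussian d {x : Fin d → ℝ | |∑ i, e i * x i| ≤ T}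
      + stdGaussian d {x : Fin d → ℝ | |∑ i, e i * x i| ≤ T}ᶜ = 1 := by
    rw [measure_add_measure_compl hA, measure_univ]
  have hfinal : ENNReal.ofReal (1 - δ) + ENNReal.ofReal δ ≤
      stdGaussian d {x : Fin d → ℝ | |∑ i, e i * x i| ≤ T} + ENNReal.ofReal δ := by
    rw [← ENNReal.ofReal_add (by linarith) hδ0.le, sub_add_cancel, ENNReal.ofReal_one, ← htot]
    exact add_le_add_right hcomp _
  exact (ENNReal.add_le_add_iff_right ENNReal.ofReal_ne_top).mp hfinal
end

section
/- Let x₁, …, xₙ ∈ ℝ^d, y₁, …, yₙ ∈ [0,1], and ŵ, w⋆ ∈ ℝ^d. Let ĝ, g⋆ : ℝ → [0,1] both be 1-Lipschitz, and suppose Σᵢ (ĝ(⟨ŵ, xᵢ⟩) − yᵢ)² ≤ Σᵢ (g⋆(⟨ŵ, xᵢ⟩) − yᵢ)². Then (1/n)·Σᵢ [ (ĝ(⟨w⋆, xᵢ⟩) − yᵢ)² − (g⋆(⟨w⋆, xᵢ⟩) − yᵢ)² ] ≤ (1/n)·Σᵢ ⟨ŵ − w⋆, xᵢ⟩² + (4/n)·Σᵢ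 |⟨ŵ − w⋆, xᵢ⟩|. -/
/-- Pointwise bound: for a 1-Lipschitz g with values in [0,1] and y ∈ [0,1],
(g b − y)² − (g a − y)² ≤ 2|a − b|. -/
lemma sq_diff_le_two_abs (g : ℝ → ℝ) (hLip : LipschitzWith 1 g)
    (h01 : ∀ t, g t ∈ Set.Icc (0 : ℝ) 1) (y : ℝ) (hy : y ∈ Set.Icc (0 : ℝ) 1)
    (a b : ℝ) : (g b - y) ^ 2 - (g a - y) ^ 2 ≤ 2 * |a - b| := by
  have hgb := h01 b
  have hga := h01 a
  have hlip : |g b - g a| ≤ |a - b| := by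
    have := hLip.dist_le_mul b a
    simpa [Real.dist_eq, abs_sub_comm] using this
  have key : (g b - y) ^ 2 - (g a - y) ^ 2
      = ((g b - y) - (g a - y)) * ((g b - y) + (g a - y)) := by ring
  have h1 : |(g b - y) - (g a - y)| = |g b - g a| := by ring_nf
  have h2 : |(g b - y) + (g a - y)| ≤ 2 := by
    have : |g b - y| ≤ 1 := by
      rw [abs_le]; constructor <;> [nlinarith [hgb.1, hgb.2, hy.1, hy.2]; nlinarith [hgb.1, hgb.2, hy.1, hy.2]]
    have h2' : |g a - y| ≤ 1 := by
      rw [abs_le]; constructor <;> [nlinarith [hga.1, hga.2, hy.1, hy.2]; nlinarith [hga.1, hga.2, hy.1, hy.2]]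
    calc |(g b - y) + (g a - y)| ≤ |g b - y| + |g a - y| := abs_add_le _ _
      _ ≤ 2 := by linarith
  calc (g b - y) ^ 2 - (g a - y) ^ 2
      ≤ |((g b - y) - (g a - y)) * ((g b - y) + (g a - y))| := by
        rw [key]; exact le_abs_self _
    _ = |(g b - y) - (g a - y)| * |(g b - y) + (g a - y)| := abs_mul _ _
    _ ≤ |a - b| * 2 := by
        rw [h1]
        exact mul_le_mul hlip h2 (abs_nonneg _) (abs_nonneg _)
    _ = 2 * |a - b| := by ring

/-- If ĝ has smaller empirical squared error than g⋆ along the projections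
⟨ŵ, xᵢ⟩, then the empirical excess of ĝ over g⋆ along the projections ⟨w⋆, xᵢ⟩ is bounded
by the quadratic and linear empirical moments of ⟨ŵ − w⋆, xᵢ⟩. -/
theorem empirical_excess_decomposition
    (d n : ℕ) (hn : 0 < n)
    (x : Fin n → Fin d → ℝ) (y : Fin n → ℝ)
    (hy : ∀ i, y i ∈ Set.Icc (0 : ℝ) 1)
    (what wstar : Fin d → ℝ)
    (ghat gstar : ℝ → ℝ)
    (hghatLip : LipschitzWith 1 ghat) (hgstarLip : LipschitzWith 1 gstar)
    (hghat01 : ∀ t, ghat t ∈ Set.Icc (0 : ℝ) 1)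
    (hgstar01 : ∀ t, gstar t ∈ Set.Icc (0 : ℝ) 1)
    (hopt : ∑ i, (ghat (∑ j, what j * x i j) - y i) ^ 2 ≤
            ∑ i, (gstar (∑ j, what j * x i j) - y i) ^ 2) :
    (1 / (n : ℝ)) * ∑ i, ((ghat (∑ j, wstar j * x i j) - y i) ^ 2 -
        (gstar (∑ j, wstar j * x i j) - y i) ^ 2) ≤
      (1 / (n : ℝ)) * ∑ i, (∑ j, (what j - wstar j) * x i j) ^ 2 +
      (4 / (n : ℝ)) * ∑ i, |∑ j, (what j - wstar j) * x i j| := by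
  set a : Fin n → ℝ := fun i => ∑ j, what j * x i j with ha
  set b : Fin n → ℝ := fun i => ∑ j, wstar j * x i j with hb
  have hdelta : ∀ i, ∑ j, (what j - wstar j) * x i j = a i - b i := by
    intro i
    simp only [ha, hb, sub_mul, Finset.sum_sub_distrib]
  have hptw : ∀ i, (ghat (b i) - y i) ^ 2 - (gstar (b i) - y i) ^ 2
      ≤ 4 * |a i - b i| + ((ghat (a i) - y i) ^ 2 - (gstar (a i) - y i) ^ 2) := by
    intro i
    have h1 := sq_diff_le_two_abs ghat hghatLip hghat01 (y i) (hy i) (a i) (b i)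
    have h2 := sq_diff_le_two_abs gstar hgstarLip hgstar01 (y i) (hy i) (b i) (a i)
    rw [abs_sub_comm (b i) (a i)] at h2
    nlinarith [h1, h2]
  have hsum : ∑ i, ((ghat (b i) - y i) ^ 2 - (gstar (b i) - y i) ^ 2)
      ≤ 4 * ∑ i, |a i - b i| := by
    calc ∑ i, ((ghat (b i) - y i) ^ 2 - (gstar (b i) - y i) ^ 2)
        ≤ ∑ i, (4 * |a i - b i| + ((ghat (a i) - y i) ^ 2 - (gstar (a i) - y i) ^ 2)) :=
          Finset.sum_le_sum fun i _ => hptw i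
      _ = 4 * ∑ i, |a i - b i| +
          (∑ i, (ghat (a i) - y i) ^ 2 - ∑ i, (gstar (a i) - y i) ^ 2) := by
          rw [Finset.sum_add_distrib, Finset.mul_sum, Finset.sum_sub_distrib]
      _ ≤ 4 * ∑ i, |a i - b i| := by
          have : ∑ i, (ghat (a i) - y i) ^ 2 - ∑ i, (gstar (a i) - y i) ^ 2 ≤ 0 := by
            simp only [ha]; linarith [hopt]
          linarith
  have hsq : (0:ℝ) ≤ ∑ i, (∑ j, (what j - wstar j) * x i j) ^ 2 :=
    Finset.sum_nonneg fun i _ => sq_nonneg _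
  have hninv : (0:ℝ) ≤ 1 / (n:ℝ) := by positivity
  simp only [hdelta]
  have := mul_le_mul_of_nonneg_left hsum hninv
  have hn4 : (4:ℝ) / n = 4 * (1 / n) := by ring
  calc (1 / (n:ℝ)) * ∑ i, ((ghat (b i) - y i) ^ 2 - (gstar (b i) - y i) ^ 2)
      ≤ (1 / (n:ℝ)) * (4 * ∑ i, |a i - b i|) := this
    _ = (4 / (n:ℝ)) * ∑ i, |a i - b i| := by ring
    _ ≤ (1 / (n:ℝ)) * ∑ i, (a i - b i) ^ 2 + (4 / (n:ℝ)) * ∑ i, |a i - b i| := by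
        have : (0:ℝ) ≤ (1 / (n:ℝ)) * ∑ i, (a i - b i) ^ 2 := by
          apply mul_nonneg hninv (Finset.sum_nonneg fun i _ => sq_nonneg _)
        linarith
end

section
/- Let W ≥ 1, n ≥ 1, fix points z₁, …, zₙ ∈ [−W, W], and let ε₁, …, εₙ be i.i.d. Rademacher random variables (uniform on {−1, +1}). Then the empirical Rademacher complexity of the class G of all monotone nondecreasing 1-Lipschitz functions g : [−W, W] → [0,1] satisfies E[ sup_{g ∈ G} (1/n)·Σᵢ εᵢ·g(zᵢ) ] ≤ 40·√W / √n. -/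
open MeasureTheory

/-- The law of n i.i.d. Rademacher random variables (uniform on {−1, +1}),
as a measure on Fin n → ℝ. -/
noncomputable def rademacherSigns (n : ℕ) : Measure (Fin n → ℝ) :=
  Measure.pi fun _ =>
    ((1 : ENNReal) / 2) • Measure.dirac (-1 : ℝ) + ((1 : ENNReal) / 2) • Measure.dirac (1 : ℝ)

open Finset
open scoped Classical

namespace RadAux


variable {n : ℕ}

/-- sign of a boolean -/
def sg (s : Fin n → Bool) (i : Fin n) : ℝ := if s i then 1 else -1

lemma sg_sq (s : Fin n → Bool) (i : Fin n) : sg s i * sg s i = 1 := by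
  unfold sg; cases s i <;> norm_num

/-- flip one coordinate -/
def flip (j : Fin n) : (Fin n → Bool) ≃ (Fin n → Bool) where
  toFun s := Function.update s j (!(s j))
  invFun s := Function.update s j (!(s j))
  left_inv s := by
    funext i
    rcases eq_or_ne i j with rfl | h
    · simp
    · simp [Function.update_of_ne h]
  right_inv s := by
    funext i
    rcases eq_or_ne i j with rfl | h
    · simp
    · simp [Function.update_of_ne h]

lemma sg_flip_self (s : Fin n → Bool) (j : Fin n) : sg (flip j s) j = - sg s j := by
  simp only [sg, flip, Equiv.coe_fn_mk, Function.update_self]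
  cases s j <;> norm_num

lemma sg_flip_ne (s : Fin n → Bool) {i j : Fin n} (h : i ≠ j) : sg (flip j s) i = sg s i := by
  simp only [sg, flip, Equiv.coe_fn_mk, Function.update_of_ne h]

variable (σ : Equiv.Perm (Fin n))

/-- the j-th increment (in sorted order), as a function of ℕ -/
def eN (s : Fin n → Bool) (j : ℕ) : ℝ := if h : j < n then sg s (σ ⟨j, h⟩) else 0

/-- partial sums -/
def S (s : Fin n → Bool) (k : ℕ) : ℝ := ∑ j ∈ range k, eN σ s j

/-- running maximum of |S| -/
def M (s : Fin n → Bool) : ℕ → ℝ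
  | 0 => 0
  | k+1 => max (M s k) |S σ s (k+1)|

lemma M_nonneg (s : Fin n → Bool) (k : ℕ) : 0 ≤ M σ s k := by
  induction k with
  | zero => simp [M]
  | succ k ih => exact le_trans ih (le_max_left _ _)

lemma abs_S_le_M (s : Fin n → Bool) (k : ℕ) : |S σ s k| ≤ M σ s k := by
  cases k with
  | zero => simp [S, M]
  | succ k => exact le_max_right _ _

lemma M_mono (s : Fin n → Bool) {k l : ℕ} (h : k ≤ l) : M σ s k ≤ M σ s l := by
  induction l with
  | zero => simp_all
  | succ l ih =>
    rcases eq_or_lt_of_le h with rfl | h'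
    · rfl
    · exact le_trans (ih (Nat.lt_succ_iff.mp h')) (le_max_left _ _)

/-- pathwise Doob inequality -/
lemma doob (s : Fin n → Bool) (K : ℕ) :
    ∑ k ∈ range K, M σ s k * (|S σ s (k+1)| - |S σ s k|)
      ≤ M σ s K * |S σ s K| - (M σ s K)^2 / 2 := by
  induction K with
  | zero => simp [S, M]
  | succ K ih =>
    rw [Finset.sum_range_succ]
    have h0 : 0 ≤ M σ s K := M_nonneg σ s K
    have habs : |S σ s (K+1)| ≤ M σ s (K+1) := le_max_right _ _
    have habs' : 0 ≤ |S σ s (K+1)| := abs_nonneg _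
    rcases max_choice (M σ s K) |S σ s (K+1)| with h | h <;>
      [skip; skip] <;>
      · have hM : M σ s (K+1) = _ := h
        nlinarith [sq_nonneg (|S σ s (K+1)| - M σ s K), abs_S_le_M σ s K]


lemma S_succ (s : Fin n → Bool) {k : ℕ} (hk : k < n) :
    S σ s (k+1) = S σ s k + sg s (σ ⟨k, hk⟩) := by
  rw [S, Finset.sum_range_succ, eN, dif_pos hk]; rfl

lemma S_flip (s : Fin n → Bool) {k : ℕ} (hk : k < n) {m : ℕ} (hm : m ≤ k) :
    S σ (flip (σ ⟨k, hk⟩) s) m = S σ s m := by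
  unfold S
  refine Finset.sum_congr rfl fun j hj => ?_
  rw [Finset.mem_range] at hj
  have hjn : j < n := lt_of_lt_of_le (lt_of_lt_of_le hj hm) (Nat.le_of_lt hk)
  have hjk : j < k := lt_of_lt_of_le hj hm
  unfold eN
  rw [dif_pos hjn, dif_pos hjn]
  exact sg_flip_ne s (fun h => absurd (σ.injective h) (by simp [Fin.ext_iff]; omega))

lemma M_flip (s : Fin n → Bool) {k : ℕ} (hk : k < n) {m : ℕ} (hm : m ≤ k) :
    M σ (flip (σ ⟨k, hk⟩) s) m = M σ s m := by
  induction m with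
  | zero => rfl
  | succ m ih =>
    show max _ _ = max _ _
    rw [ih (le_trans (Nat.le_succ m) hm), S_flip σ s hk hm]

lemma S_flip_succ (s : Fin n → Bool) {k : ℕ} (hk : k < n) :
    S σ (flip (σ ⟨k, hk⟩) s) (k+1) = S σ s k - sg s (σ ⟨k, hk⟩) := by
  rw [S_succ σ _ hk, S_flip σ s hk (le_refl k), sg_flip_self]
  ring

/-- the submartingale step: each summand of the Doob decomposition has
nonnegative expectation -/
lemma key_nonneg {k : ℕ} (hk : k < n) :
    0 ≤ ∑ s : Fin n → Bool, M σ s k * (|S σ s (k+1)| - |S σ s k|) := by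
  set F : (Fin n → Bool) → ℝ := fun s => M σ s k * (|S σ s (k+1)| - |S σ s k|) with hF
  have hflip : ∑ s : Fin n → Bool, F (flip (σ ⟨k, hk⟩) s) = ∑ s : Fin n → Bool, F s :=
    Equiv.sum_comp (flip (σ ⟨k, hk⟩)) F
  have hpt : ∀ s : Fin n → Bool, 0 ≤ F s + F (flip (σ ⟨k, hk⟩) s) := by
    intro s
    have h1 : F (flip (σ ⟨k, hk⟩) s)
        = M σ s k * (|S σ s k - sg s (σ ⟨k, hk⟩)| - |S σ s k|) := by
      rw [hF]
      simp only []
      rw [M_flip σ s hk (le_refl k), S_flip_succ σ s hk, S_flip σ s hk (le_refl k)]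
    rw [h1, hF]
    simp only []
    rw [S_succ σ s hk]
    have habs : 2 * |S σ s k| ≤ |S σ s k + sg s (σ ⟨k, hk⟩)| + |S σ s k - sg s (σ ⟨k, hk⟩)| := by
      have := abs_add_le (S σ s k + sg s (σ ⟨k, hk⟩)) (S σ s k - sg s (σ ⟨k, hk⟩))
      have h2 : (S σ s k + sg s (σ ⟨k, hk⟩)) + (S σ s k - sg s (σ ⟨k, hk⟩)) = 2 * S σ s k := by ring
      rw [h2, abs_mul, abs_two] at this
      linarith
    nlinarith [M_nonneg σ s k]
  have h2 : 0 ≤ ∑ s : Fin n → Bool, (F s + F (flip (σ ⟨k, hk⟩) s)) :=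
    Finset.sum_nonneg fun s _ => hpt s
  rw [Finset.sum_add_distrib, hflip] at h2
  linarith

lemma S_top (s : Fin n → Bool) : S σ s n = ∑ i : Fin n, sg s i := by
  have h1 : S σ s n = ∑ i : Fin n, sg s (σ i) := by
    rw [S, ← Fin.sum_univ_eq_sum_range (fun j => eN σ s j) n]
    refine Finset.sum_congr rfl fun i _ => ?_
    rw [eN, dif_pos i.isLt]
  rw [h1]
  exact Equiv.sum_comp σ (sg s)

lemma sum_sg_orth {i j : Fin n} (h : i ≠ j) :
    ∑ s : Fin n → Bool, sg s i * sg s j = 0 := by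
  have hflip : ∑ s : Fin n → Bool, (sg (flip i s) i * sg (flip i s) j)
      = ∑ s : Fin n → Bool, sg s i * sg s j :=
    Equiv.sum_comp (flip i) (fun s => sg s i * sg s j)
  have heq : ∀ s : Fin n → Bool, sg (flip i s) i * sg (flip i s) j = -(sg s i * sg s j) := by
    intro s
    rw [sg_flip_self, sg_flip_ne s (Ne.symm h)]
    ring
  simp_rw [heq] at hflip
  rw [Finset.sum_neg_distrib] at hflip
  linarith

lemma sum_sq_S : ∑ s : Fin n → Bool, (S σ s n)^2 = n * 2^n := by
  have : ∀ s : Fin n → Bool, (S σ s n)^2 = ∑ i : Fin n, ∑ j : Fin n, sg s i * sg s j := by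
    intro s
    rw [S_top, sq, Finset.sum_mul_sum]
  simp_rw [this]
  have hin : ∀ i j : Fin n, ∑ s : Fin n → Bool, sg s i * sg s j
      = if i = j then ((2:ℝ)^n) else 0 := by
    intro i j
    rcases eq_or_ne i j with rfl | h
    · rw [if_pos rfl]
      simp_rw [sg_sq]
      rw [Finset.sum_const, Finset.card_univ]
      have : Fintype.card (Fin n → Bool) = 2^n := by
        rw [Fintype.card_fun, Fintype.card_bool, Fintype.card_fin]
      rw [this]
      simp
    · rw [if_neg h]
      exact sum_sg_orth h
  calc ∑ s : Fin n → Bool, ∑ i : Fin n, ∑ j : Fin n, sg s i * sg s j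
      = ∑ i : Fin n, ∑ s : Fin n → Bool, ∑ j : Fin n, sg s i * sg s j := Finset.sum_comm
    _ = ∑ i : Fin n, ∑ j : Fin n, ∑ s : Fin n → Bool, sg s i * sg s j :=
        Finset.sum_congr rfl fun i _ => Finset.sum_comm
    _ = ∑ i : Fin n, ∑ j : Fin n, (if i = j then ((2:ℝ)^n) else 0) := by
        refine Finset.sum_congr rfl fun i _ => Finset.sum_congr rfl fun j _ => hin i j
    _ = ∑ _i : Fin n, (2:ℝ)^n := by
        refine Finset.sum_congr rfl fun i _ => ?_
        rw [Finset.sum_ite_eq]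
        simp
    _ = n * 2^n := by
        rw [Finset.sum_const, Finset.card_univ, Fintype.card_fin, nsmul_eq_mul]


/-- Doob L² bound: the expected maximum is at most 2·2ⁿ·√n. -/
lemma sum_M_le : ∑ s : Fin n → Bool, M σ s n ≤ 2 * 2^n * Real.sqrt n := by
  set A := ∑ s : Fin n → Bool, M σ s n with hA
  set B := ∑ s : Fin n → Bool, (M σ s n)^2 with hB
  set C := ∑ s : Fin n → Bool, M σ s n * |S σ s n| with hC
  have hBnn : 0 ≤ B := Finset.sum_nonneg fun s _ => sq_nonneg _
  have hAnn : 0 ≤ A := Finset.sum_nonneg fun s _ => M_nonneg σ s n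
  -- B ≤ 2 C
  have hBC : B ≤ 2 * C := by
    have h1 : 0 ≤ ∑ s : Fin n → Bool, ∑ k ∈ range n,
        M σ s k * (|S σ s (k+1)| - |S σ s k|) := by
      rw [Finset.sum_comm]
      exact Finset.sum_nonneg fun k hk => key_nonneg σ (Finset.mem_range.mp hk)
    have h2 : ∑ s : Fin n → Bool, ∑ k ∈ range n, M σ s k * (|S σ s (k+1)| - |S σ s k|)
        ≤ ∑ s : Fin n → Bool, (M σ s n * |S σ s n| - (M σ s n)^2 / 2) :=
      Finset.sum_le_sum fun s _ => doob σ s n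
    rw [Finset.sum_sub_distrib] at h2
    have h3 : ∑ s : Fin n → Bool, (M σ s n)^2 / 2 = B / 2 := by
      rw [hB, Finset.sum_div]
    rw [h3] at h2
    linarith
  -- C² ≤ B · (n 2ⁿ)
  have hCS : C^2 ≤ B * (n * 2^n) := by
    have := Finset.sum_mul_sq_le_sq_mul_sq Finset.univ (fun s : Fin n → Bool => M σ s n)
      (fun s => |S σ s n|)
    simp_rw [sq_abs] at this
    rw [sum_sq_S] at this
    exact this
  -- hence B ≤ 4 n 2ⁿ
  have hD : (0:ℝ) ≤ n * 2^n := by positivity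
  have hB4 : B ≤ 4 * (n * 2^n) := by
    rcases eq_or_lt_of_le hBnn with h | h
    · linarith
    · nlinarith
  -- A² ≤ 2ⁿ B
  have hA2 : A^2 ≤ 2^n * B := by
    have := Finset.sum_mul_sq_le_sq_mul_sq Finset.univ (fun _ : Fin n → Bool => (1:ℝ))
      (fun s => M σ s n)
    simp only [one_mul, one_pow] at this
    rw [Finset.sum_const, Finset.card_univ] at this
    have hcard : Fintype.card (Fin n → Bool) = 2^n := by
      rw [Fintype.card_fun, Fintype.card_bool, Fintype.card_fin]
    rw [hcard] at this
    simpa using this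
  have hA4 : A^2 ≤ (2 * 2^n * Real.sqrt n)^2 := by
    have hs : Real.sqrt n ^ 2 = n := Real.sq_sqrt (Nat.cast_nonneg n)
    have : (2 * 2^n * Real.sqrt n)^2 = 4 * ((2:ℝ)^n)^2 * n := by
      rw [mul_pow, mul_pow, hs]; ring
    rw [this]
    calc A^2 ≤ 2^n * B := hA2
      _ ≤ 2^n * (4 * (n * 2^n)) := by
          have h2n : (0:ℝ) ≤ 2^n := by positivity
          exact mul_le_mul_of_nonneg_left hB4 h2n
      _ = 4 * ((2:ℝ)^n)^2 * n := by ring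
  have hR : (0:ℝ) ≤ 2 * 2^n * Real.sqrt n := by positivity
  nlinarith


lemma abel_bound {n : ℕ} (σ : Equiv.Perm (Fin n)) (s : Fin n → Bool)
    (a : ℕ → ℝ) (h00 : 0 ≤ a 0) (h0 : 0 ≤ a (n-1)) (h1 : a (n-1) ≤ 1)
    (hamono : ∀ j, j + 1 ≤ n - 1 → a j ≤ a (j+1)) :
    ∑ j ∈ Finset.range n, a j * eN σ s j ≤ 2 * M σ s n := by
  have habel := Finset.sum_range_by_parts a (eN σ s) n
  have hS_def : ∀ k, ∑ j ∈ Finset.range k, eN σ s j = S σ s k := fun k => rfl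
  simp_rw [smul_eq_mul, hS_def] at habel
  rw [habel]
  have hM := M_nonneg σ s n
  have hSn : |S σ s n| ≤ M σ s n := abs_S_le_M σ s n
  have hmain : a (n-1) * S σ s n ≤ a (n-1) * M σ s n :=
    mul_le_mul_of_nonneg_left (le_trans (le_abs_self _) hSn) h0
  have h2 : -∑ i ∈ Finset.range (n-1), (a (i+1) - a i) * S σ s (i+1)
      ≤ ∑ i ∈ Finset.range (n-1), (a (i+1) - a i) * M σ s n := by
    rw [← Finset.sum_neg_distrib]
    refine Finset.sum_le_sum fun i hi => ?_
    have hi' : i + 1 ≤ n - 1 := Finset.mem_range.mp hi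
    have hd : 0 ≤ a (i+1) - a i := sub_nonneg.mpr (hamono i hi')
    have hS : |S σ s (i+1)| ≤ M σ s n :=
      le_trans (abs_S_le_M σ s (i+1)) (M_mono σ s (by omega))
    calc -((a (i+1) - a i) * S σ s (i+1))
        = (a (i+1) - a i) * (-(S σ s (i+1))) := by ring
      _ ≤ (a (i+1) - a i) * M σ s n :=
          mul_le_mul_of_nonneg_left (le_trans (neg_le_abs _) hS) hd
  have h3 : ∑ i ∈ Finset.range (n-1), (a (i+1) - a i) * M σ s n
      = (a (n-1) - a 0) * M σ s n := by
    rw [← Finset.sum_mul, Finset.sum_range_sub]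
  rw [h3] at h2
  nlinarith



/-- the sign vector of booleans as reals -/
def sv {n : ℕ} (s : Fin n → Bool) : Fin n → ℝ := fun i => if s i then 1 else -1

instance : IsFiniteMeasure
    (((1 : ENNReal) / 2) • Measure.dirac (-1 : ℝ) + ((1 : ENNReal) / 2) • Measure.dirac (1 : ℝ)) := by
  constructor
  simp [Measure.add_apply, Measure.smul_apply]

lemma measure_eq (n : ℕ) :
    rademacherSigns n
      = ∑ s : Fin n → Bool, ((2:ENNReal)^n)⁻¹ • Measure.dirac (sv s) := by
  haveI : ∀ _ : Fin n, SigmaFinite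
      (((1 : ENNReal) / 2) • Measure.dirac (-1 : ℝ) + ((1 : ENNReal) / 2) • Measure.dirac (1 : ℝ)) :=
    fun _ => inferInstance
  refine Measure.pi_eq fun A hA => ?_
  have hAm : MeasurableSet (Set.pi Set.univ A) := MeasurableSet.univ_pi hA
  rw [Measure.finset_sum_apply]
  simp_rw [Measure.smul_apply, Measure.dirac_apply' _ hAm, smul_eq_mul]
  have hterm : ∀ s : Fin n → Bool,
      ((2:ENNReal)^n)⁻¹ * (Set.pi Set.univ A).indicator 1 (sv s)
        = ∏ i : Fin n, ((2:ENNReal))⁻¹ * (if (if s i then (1:ℝ) else -1) ∈ A i then 1 else 0) := by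
    intro s
    rw [Finset.prod_mul_distrib, Finset.prod_const, Finset.card_univ, Fintype.card_fin,
      ← ENNReal.inv_pow, Finset.prod_boole]
    congr 1
    rw [Set.indicator_apply]
    by_cases h : sv s ∈ Set.pi Set.univ A
    · rw [if_pos h, if_pos]
      · rfl
      · intro i _
        exact h i (Set.mem_univ i)
    · rw [if_neg h, if_neg]
      intro hall
      exact h fun i _ => hall i (Finset.mem_univ i)
  simp_rw [hterm]
  rw [← Fintype.piFinset_univ]
  have hps := Finset.prod_univ_sum (fun _ : Fin n => (Finset.univ : Finset Bool))
    (fun i b => ((2:ENNReal))⁻¹ * (if (if b then (1:ℝ) else -1) ∈ A i then 1 else 0))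
  rw [← hps]
  refine Finset.prod_congr rfl fun i _ => ?_
  rw [Measure.add_apply, Measure.smul_apply, Measure.smul_apply,
    Measure.dirac_apply' _ (hA i), Measure.dirac_apply' _ (hA i)]
  simp only [smul_eq_mul, Set.indicator_apply, Pi.one_apply, one_div]
  rw [Fintype.sum_bool]
  norm_num
  exact add_comm _ _


lemma integral_eq (n : ℕ) (f : (Fin n → ℝ) → ℝ) :
    ∫ ε, f ε ∂(rademacherSigns n) = ((2:ℝ)^n)⁻¹ * ∑ s : Fin n → Bool, f (sv s) := by
  rw [measure_eq]
  have hint : ∀ s : Fin n → Bool, Integrable f (((2:ENNReal)^n)⁻¹ • Measure.dirac (sv s)) := by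
    intro s
    refine Integrable.smul_measure ?_ ?_
    · have hae : f =ᵐ[Measure.dirac (sv s)] fun _ => f (sv s) := by
        rw [Filter.EventuallyEq, MeasureTheory.ae_dirac_eq]
        exact Filter.eventually_pure.mpr rfl
      exact (integrable_const (f (sv s))).congr hae.symm
    · exact ENNReal.inv_ne_top.mpr (pow_ne_zero n (by norm_num))
  rw [integral_finset_sum_measure fun s _ => hint s]
  simp_rw [integral_smul_measure, integral_dirac]
  have htr : ((2:ENNReal)^n)⁻¹.toReal = ((2:ℝ)^n)⁻¹ := by
    rw [ENNReal.toReal_inv]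
    norm_num
  simp_rw [htr, smul_eq_mul, ← Finset.mul_sum]

end RadAux

/-- the empirical Rademacher complexity of the class of monotone
nondecreasing 1-Lipschitz functions g : [−W, W] → [0,1] at points z₁,…,zₙ ∈ [−W,W]
is at most 40·√W/√n. -/
theorem rademacher_complexity_monotone_lipschitz
    (W : ℝ) (hW : 1 ≤ W) (n : ℕ) (hn : 0 < n)
    (z : Fin n → ℝ) (hz : ∀ i, z i ∈ Set.Icc (-W) W) :
    (∫ ε, (⨆ g : {g : ℝ → ℝ // MonotoneOn g (Set.Icc (-W) W) ∧
          LipschitzOnWith 1 g (Set.Icc (-W) W) ∧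
          Set.MapsTo g (Set.Icc (-W) W) (Set.Icc (0 : ℝ) 1)},
        (1 / (n : ℝ)) * ∑ i, ε i * (g : ℝ → ℝ) (z i)) ∂(rademacherSigns n)) ≤
      40 * Real.sqrt W / Real.sqrt n := by
  classical
  set σ : Equiv.Perm (Fin n) := Tuple.sort z with hσdef
  have hσ : Monotone (z ∘ σ) := Tuple.monotone_sort z
  have hne : Nonempty {g : ℝ → ℝ // MonotoneOn g (Set.Icc (-W) W) ∧
      LipschitzOnWith 1 g (Set.Icc (-W) W) ∧
      Set.MapsTo g (Set.Icc (-W) W) (Set.Icc (0 : ℝ) 1)} :=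
    ⟨⟨fun _ => 0, monotoneOn_const,
      (by intro x _ y _; simp : LipschitzOnWith 1 (fun _ => (0:ℝ)) (Set.Icc (-W) W)),
      fun x _ => ⟨le_refl 0, zero_le_one⟩⟩⟩
  have hsup : ∀ s : Fin n → Bool,
      (⨆ g : {g : ℝ → ℝ // MonotoneOn g (Set.Icc (-W) W) ∧
          LipschitzOnWith 1 g (Set.Icc (-W) W) ∧
          Set.MapsTo g (Set.Icc (-W) W) (Set.Icc (0 : ℝ) 1)},
        (1 / (n : ℝ)) * ∑ i, RadAux.sv s i * (g : ℝ → ℝ) (z i))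
        ≤ (1 / (n : ℝ)) * (2 * RadAux.M σ s n) := by
    intro s
    refine ciSup_le ?_
    rintro ⟨g, hmono, hlip, hmaps⟩
    have h1n : (0:ℝ) ≤ 1 / (n:ℝ) := by positivity
    refine mul_le_mul_of_nonneg_left ?_ h1n
    set a : ℕ → ℝ := fun j => if h : j < n then g (z (σ ⟨j, h⟩)) else 0 with ha
    have hval : ∀ (j : ℕ) (h : j < n), g (z (σ ⟨j, h⟩)) ∈ Set.Icc (0:ℝ) 1 :=
      fun j h => hmaps (hz _)
    have hstep : ∑ i : Fin n, RadAux.sv s i * g (z i)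
        = ∑ j ∈ Finset.range n, a j * RadAux.eN σ s j := by
      have e1 : ∑ i : Fin n, RadAux.sv s i * g (z i)
          = ∑ i : Fin n, RadAux.sv s (σ i) * g (z (σ i)) :=
        (Equiv.sum_comp σ (fun i => RadAux.sv s i * g (z i))).symm
      rw [e1, ← Fin.sum_univ_eq_sum_range (fun j => a j * RadAux.eN σ s j) n]
      refine Finset.sum_congr rfl fun i _ => ?_
      show RadAux.sv s (σ i) * g (z (σ i)) = a (i : ℕ) * RadAux.eN σ s (i : ℕ)
      rw [ha]
      simp only []
      rw [dif_pos i.isLt]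
      unfold RadAux.eN
      rw [dif_pos i.isLt]
      simp only [Fin.eta]
      rw [mul_comm]
      rfl
    rw [hstep]
    have hn1 : n - 1 < n := by omega
    refine RadAux.abel_bound σ s a ?_ ?_ ?_ ?_
    · rw [ha]; simp only []; rw [dif_pos hn]; exact (hval 0 hn).1
    · rw [ha]; simp only []; rw [dif_pos hn1]; exact (hval _ hn1).1
    · rw [ha]; simp only []; rw [dif_pos hn1]; exact (hval _ hn1).2
    · intro j hj
      have hj1 : j < n := by omega
      have hj2 : j + 1 < n := by omega
      rw [ha]; simp only []; rw [dif_pos hj1, dif_pos hj2]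
      refine hmono (hz _) (hz _) ?_
      exact hσ (show (⟨j, hj1⟩ : Fin n) ≤ ⟨j+1, hj2⟩ from by
        simp [Fin.le_def])
  rw [RadAux.integral_eq]
  refine le_trans (mul_le_mul_of_nonneg_left
    (Finset.sum_le_sum fun s _ => hsup s) (by positivity : (0:ℝ) ≤ ((2:ℝ)^n)⁻¹)) ?_
  have hnR : (0:ℝ) < n := Nat.cast_pos.mpr hn
  have heq1 : ∑ s : Fin n → Bool, (1 / (n:ℝ)) * (2 * RadAux.M σ s n)
      = (2 / (n:ℝ)) * ∑ s : Fin n → Bool, RadAux.M σ s n := by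
    rw [Finset.mul_sum]
    exact Finset.sum_congr rfl fun s _ => by ring
  rw [heq1]
  have hMle := RadAux.sum_M_le σ
  have hstep2 : ((2:ℝ)^n)⁻¹ * ((2 / (n:ℝ)) * ∑ s : Fin n → Bool, RadAux.M σ s n)
      ≤ ((2:ℝ)^n)⁻¹ * ((2 / (n:ℝ)) * (2 * 2^n * Real.sqrt n)) := by
    refine mul_le_mul_of_nonneg_left
      (mul_le_mul_of_nonneg_left hMle (by positivity)) (by positivity)
  refine le_trans hstep2 ?_
  have h2n : (0:ℝ) < 2^n := by positivity
  have heq2 : ((2:ℝ)^n)⁻¹ * ((2 / (n:ℝ)) * (2 * 2^n * Real.sqrt n))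
      = 4 * Real.sqrt n / n := by
    field_simp
    ring
  rw [heq2]
  have hsq : Real.sqrt n * Real.sqrt n = n := Real.mul_self_sqrt (le_of_lt hnR)
  have hsqn : 0 < Real.sqrt n := Real.sqrt_pos.mpr hnR
  have hW1 : (1:ℝ) ≤ Real.sqrt W := by
    rw [show (1:ℝ) = Real.sqrt 1 from Real.sqrt_one.symm]
    exact Real.sqrt_le_sqrt hW
  rw [div_le_div_iff₀ hnR hsqn]
  nlinarith
end

section
/- Let W > 0 and 0 < r ≤ 1. There exists a finite set N of functions from [−W, W] to [0,1] with cardinality |N| ≤ (1/r)·2^{2W/r} such that for every monotone nondecreasing 1-Lipschitz function g : [−W, W] → [0,1] there is some f ∈ N with sup_{x ∈ [−W, W]} |g(x) − f(x)| ≤ r. -/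
open Finset

lemma clamp_abs {g c : ℝ} (hg : g ≤ 1) : |g - min c 1| ≤ |g - c| := by
  rcases le_or_gt c 1 with h | h
  · rw [min_eq_left h]
  · rw [min_eq_right h.le]
    have h1 : |g - 1| = 1 - g := by rw [abs_sub_comm, abs_of_nonneg (by linarith)]
    have h2 : |g - c| = c - g := by rw [abs_sub_comm, abs_of_nonneg (by linarith)]
    linarith

lemma chord_pow {s : ℝ} (h0 : 0 ≤ s) (h1 : s ≤ 1) : 2 / (2 - s) ≤ (2:ℝ) ^ s := by
  have key : (2:ℝ) ^ (-s) ≤ 1 - s/2 := by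
    have hc := convexOn_exp.2 (Set.mem_univ (-Real.log 2)) (Set.mem_univ (0:ℝ))
      h0 (by linarith : (0:ℝ) ≤ 1 - s) (by ring)
    simp only [smul_eq_mul, mul_zero, add_zero, Real.exp_zero] at hc
    rw [Real.exp_neg, Real.exp_log (by norm_num : (0:ℝ) < 2)] at hc
    rw [Real.rpow_def_of_pos (by norm_num : (0:ℝ) < 2)]
    calc Real.exp (Real.log 2 * (-s)) = Real.exp (s * (-Real.log 2)) := by ring_nf
    _ ≤ s * 2⁻¹ + (1 - s) * 1 := hc
    _ = 1 - s/2 := by ring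
  have hpos : (0:ℝ) < (2:ℝ) ^ s := Real.rpow_pos_of_pos (by norm_num) s
  rw [Real.rpow_neg (by norm_num : (0:ℝ) ≤ 2)] at key
  have h2 : (1:ℝ) ≤ (1 - s/2) * (2:ℝ)^s := by
    calc (1:ℝ) = ((2:ℝ)^s)⁻¹ * (2:ℝ)^s := (inv_mul_cancel₀ hpos.ne').symm
    _ ≤ (1 - s/2) * (2:ℝ)^s := mul_le_mul_of_nonneg_right key hpos.le
  rw [div_le_iff₀ (by linarith : (0:ℝ) < 2 - s)]
  nlinarith

def Asum (n j : ℕ) : ℕ := ∑ s ∈ Finset.range (j+1), n.choose s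

lemma Asum_mono (n : ℕ) : Monotone (Asum n) := by
  intro j k hjk
  exact Finset.sum_le_sum_of_subset (Finset.range_subset_range.2 (by omega))

lemma Asum_eq (n j : ℕ) (h : n ≤ j) : Asum n j = 2^n := by
  rw [Asum, ← Nat.sum_range_choose n]
  refine (Finset.sum_subset (Finset.range_subset_range.2 (by omega)) ?_).symm
  intro x hx1 hx2
  simp only [Finset.mem_range] at hx1 hx2
  exact Nat.choose_eq_zero_of_lt (by omega)

lemma Asum_pair (n j : ℕ) (h : j < n) : Asum n j + Asum n (n-1-j) = 2^n := by
  have hr : Asum n (n-1-j) = ∑ i ∈ Finset.Ico (j+1) (n+1), n.choose i := by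
    rw [Asum]
    apply Finset.sum_nbij' (i := fun s => n - s) (j := fun i => n - i)
    · intro a ha; simp at ha ⊢; omega
    · intro a ha; simp at ha ⊢; omega
    · intro a ha; simp at ha; omega
    · intro a ha; simp at ha; omega
    · intro a ha; simp at ha
      rw [Nat.choose_symm (by omega)]
  rw [Asum, hr, Finset.sum_range_add_sum_Ico _ (by omega)]
  exact Nat.sum_range_choose n

lemma Asum_sum_le (n K : ℕ) (h : K ≤ n) :
    ∑ j ∈ Finset.range K, Asum n j ≤ K * 2^(n-1) := by
  rcases Nat.eq_zero_or_pos K with rfl | hK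
  · simp
  have hn : 1 ≤ n := le_trans hK h
  have h1 : ∑ j ∈ Finset.range K, Asum n j ≤ ∑ j ∈ Finset.range K, Asum n (n - K + j) :=
    Finset.sum_le_sum (fun j _ => Asum_mono n (by omega))
  have h2 : ∑ j ∈ Finset.range K, Asum n (n - K + j)
      = ∑ j ∈ Finset.range K, Asum n (n - 1 - j) := by
    rw [← Finset.sum_range_reflect (fun j => Asum n (n - K + j)) K]
    apply Finset.sum_congr rfl
    intro j hj
    simp at hj
    congr 1
    omega
  have h3 : ∑ j ∈ Finset.range K, (Asum n j + Asum n (n - 1 - j)) = K * 2^n := by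
    rw [Finset.sum_congr rfl (fun j hj => Asum_pair n j (by simp at hj; omega))]
    simp [mul_comm]
  have h4 : 2 * (∑ j ∈ Finset.range K, Asum n j) ≤ K * 2^n := by
    rw [two_mul]
    calc ∑ j ∈ Finset.range K, Asum n j + ∑ j ∈ Finset.range K, Asum n j
        ≤ ∑ j ∈ Finset.range K, Asum n j + ∑ j ∈ Finset.range K, Asum n (n - 1 - j) := by
          rw [← h2] at *; omega
      _ = K * 2^n := by rw [← h3, Finset.sum_add_distrib]
  have : K * 2^n = 2 * (K * 2^(n-1)) := by
    rw [show n = (n-1) + 1 by omega, pow_succ]; ring_nf; simp [Nat.sub_add_cancel hn]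
  omega

lemma Asum_sum_le' (n K : ℕ) (h : n ≤ K) :
    ∑ j ∈ Finset.range K, Asum n j ≤ n * 2^(n-1) + (K - n) * 2^n := by
  rw [← Finset.sum_range_add_sum_Ico _ h]
  have h1 := Asum_sum_le n n le_rfl
  have h2 : ∑ j ∈ Finset.Ico n K, Asum n j = (K - n) * 2^n := by
    rw [Finset.sum_congr rfl (fun j hj => Asum_eq n j (by simp at hj; omega))]
    simp [Nat.card_Ico]
  omega


lemma card_powerset_filter (n c : ℕ) :
    ((Finset.range n).powerset.filter (fun S => S.card ≤ c)).card = Asum n c := by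
  have he : (Finset.range n).powerset.filter (fun S => S.card ≤ c)
      = (Finset.range (c+1)).biUnion (fun s => Finset.powersetCard s (Finset.range n)) := by
    ext T
    simp [Finset.mem_biUnion, Finset.mem_powersetCard, Nat.lt_succ_iff]
    tauto
  rw [he, Finset.card_biUnion]
  · rw [Asum]
    apply Finset.sum_congr rfl
    intro s _
    rw [Finset.card_powersetCard, Finset.card_range]
  · intro s1 _ s2 _ hne
    apply Finset.disjoint_left.2
    intro T h1 h2
    rw [Finset.mem_powersetCard] at h1 h2
    exact hne (by omega)

lemma q_step_card (q : ℕ → ℕ) (n : ℕ)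
    (hstep : ∀ j < n, q j ≤ q (j+1) ∧ q (j+1) ≤ q j + 1) :
    ∀ i ≤ n, q i = q 0 +
      ((((Finset.range n).filter (fun j => q j < q (j+1)))).filter (fun j => j < i)).card := by
  intro i
  induction i with
  | zero => intro _; simp
  | succ i ih =>
    intro hi
    have hih := ih (by omega)
    set S := (Finset.range n).filter (fun j => q j < q (j+1)) with hS
    have hsplit : S.filter (fun j => j < i + 1)
        = S.filter (fun j => j < i) ∪ S.filter (fun j => j = i) := by
      rw [← Finset.filter_or]
      apply Finset.filter_congr
      intro j _
      constructor
      · intro h; omega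
      · intro h; omega
    have hdisj : Disjoint (S.filter (fun j => j < i)) (S.filter (fun j => j = i)) := by
      apply Finset.disjoint_left.2
      intro j h1 h2
      simp only [Finset.mem_filter] at h1 h2
      omega
    rw [hsplit, Finset.card_union_of_disjoint hdisj]
    have heq : S.filter (fun j => j = i) = if i ∈ S then {i} else ∅ := by
      split
      · ext j; simp only [Finset.mem_filter, Finset.mem_singleton]
        constructor
        · intro ⟨_, h⟩; exact h
        · rintro rfl; exact ⟨by assumption, rfl⟩
      · ext j; simp only [Finset.mem_filter, Finset.notMem_empty, iff_false]
        rintro ⟨hj, rfl⟩; exact absurd hj (by assumption)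
    have hstepi := hstep i (by omega)
    by_cases hmem : i ∈ S
    · have : q i < q (i+1) := by
        rw [hS, Finset.mem_filter] at hmem; exact hmem.2
      rw [heq, if_pos hmem]
      simp only [Finset.card_singleton]
      omega
    · have : ¬ q i < q (i+1) := by
        intro hlt
        exact hmem (by rw [hS, Finset.mem_filter]; exact ⟨Finset.mem_range.2 (by omega), hlt⟩)
      rw [heq, if_neg hmem]
      simp only [Finset.card_empty]
      omega


set_option maxHeartbeats 1600000 in
/-- the L_∞ covering number at radius r ∈ (0,1] of the class of monotone
nondecreasing 1-Lipschitz [0,1]-valued functions on [−W, W] is at most (1/r)·2^{2W/r}. -/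
theorem covering_number_monotone_lipschitz
    (W r : ℝ) (hW : 0 < W) (hr : 0 < r) (hr1 : r ≤ 1) :
    ∃ N : Finset (ℝ → ℝ),
      (∀ f ∈ N, Set.MapsTo f (Set.Icc (-W) W) (Set.Icc (0 : ℝ) 1)) ∧
      (N.card : ℝ) ≤ (1 / r) * (2 : ℝ) ^ (2 * W / r) ∧
      ∀ g : ℝ → ℝ, MonotoneOn g (Set.Icc (-W) W) →
        LipschitzOnWith 1 g (Set.Icc (-W) W) →
        Set.MapsTo g (Set.Icc (-W) W) (Set.Icc (0 : ℝ) 1) →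
        ∃ f ∈ N, ∀ x ∈ Set.Icc (-W) W, |g x - f x| ≤ r := by
  have htpos : 0 < 2 * W / r := by positivity
  have h2t1 : (1:ℝ) ≤ (2:ℝ) ^ (2 * W / r) := by
    rw [← Real.rpow_zero 2]
    exact Real.rpow_le_rpow_of_exponent_le one_le_two htpos.le
  have hur : (1:ℝ) ≤ 1 / r := by
    rw [le_div_iff₀ hr]; linarith
  by_cases hhalf : 1/2 ≤ r
  · refine ⟨{fun _ => 1/2}, ?_, ?_, ?_⟩
    · intro f hf
      simp only [Finset.mem_singleton] at hf
      subst hf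
      intro x _
      constructor <;> norm_num
    · rw [Finset.card_singleton]
      push_cast
      calc (1:ℝ) = 1 * 1 := by ring
        _ ≤ (1/r) * (2:ℝ) ^ (2 * W / r) := by
            apply mul_le_mul hur h2t1 zero_le_one (by linarith)
    · intro g hmono hlip hmaps
      refine ⟨fun _ => 1/2, Finset.mem_singleton_self _, ?_⟩
      intro x hx
      have h01 := hmaps hx
      rw [Set.mem_Icc] at h01
      rw [abs_le]
      constructor <;> [linarith [h01.1]; linarith [h01.2]]
  · classical
    have hhalf : r < 1/2 := by push_neg at hhalf; exact hhalf
    by_cases hsmall : 2 * W ≤ (4/3) * r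
    · -- constants net
      have hWr : W ≤ (2/3) * r := by linarith
      have hdpos : 0 < r - W := by linarith
      have hd3 : r/3 ≤ r - W := by linarith
      set d := r - W with hd
      set K := ⌈1/(2*d)⌉₊ with hKdef
      have hK1 : 1 ≤ K := Nat.one_le_ceil_iff.2 (by positivity)
      refine ⟨(Finset.range K).image (fun j : ℕ => fun _ : ℝ => min (W + (2*(j:ℝ)+1)*d) 1),
        ?_, ?_, ?_⟩
      · intro f hf
        simp only [Finset.mem_image, Finset.mem_range] at hf
        obtain ⟨j, hj, rfl⟩ := hf
        intro x _
        refine ⟨le_min (by positivity) zero_le_one, min_le_right _ _⟩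
      · have hcard : (((Finset.range K).image
            (fun j : ℕ => fun _ : ℝ => min (W + (2*(j:ℝ)+1)*d) 1)).card : ℝ) ≤ K := by
          exact_mod_cast le_trans Finset.card_image_le (le_of_eq (Finset.card_range K))
        have hKle : (K:ℝ) ≤ 1/(2*d) + 1 := (Nat.ceil_lt_add_one (by positivity)).le
        refine le_trans hcard ?_
        by_cases ht1 : 2*W/r ≤ 1
        · have hch := chord_pow htpos.le ht1
          have hrd : r * (2 - 2*W/r) = 2*d := by
            rw [hd]; field_simp
          have heq : (1/r) * (2/(2 - 2*W/r)) = 1/d := by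
            rw [div_mul_div_comm, one_mul, hrd]
            rw [div_eq_div_iff (by positivity) (by positivity)]
            ring
          have h12d : (1:ℝ) ≤ 1/(2*d) := by
            rw [le_div_iff₀ (by positivity)]; linarith
          have hdd : (1:ℝ)/d = 2 * (1/(2*d)) := by field_simp
          have h2W : 0 < 2 - 2*W/r := by
            rw [sub_pos]; rw [div_lt_iff₀ hr]; linarith
          calc (K:ℝ) ≤ 1/(2*d) + 1 := hKle
            _ ≤ 1/d := by linarith
            _ = (1/r) * (2/(2 - 2*W/r)) := heq.symm
            _ ≤ (1/r) * (2:ℝ)^(2*W/r) := by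
                apply mul_le_mul_of_nonneg_left hch (by positivity)
        · push_neg at ht1
          have h2t2 : (2:ℝ) ≤ (2:ℝ)^(2*W/r) := by
            calc (2:ℝ) = (2:ℝ)^(1:ℝ) := (Real.rpow_one 2).symm
              _ ≤ (2:ℝ)^(2*W/r) := Real.rpow_le_rpow_of_exponent_le one_le_two (by linarith)
          have h1 : 1/(2*d) ≤ 3/(2*r) := by
            rw [div_le_div_iff₀ (by positivity) (by positivity)]
            nlinarith
          have h2 : (1:ℝ) ≤ 1/(2*r) := by
            rw [le_div_iff₀ (by positivity)]; linarith
          have h3 : 3/(2*r) + 1 ≤ 2 * (1/r) := by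
            have : (2:ℝ) * (1/r) = 4 * (1/(2*r)) := by field_simp; ring
            have h4 : (3:ℝ)/(2*r) = 3 * (1/(2*r)) := by ring
            linarith
          calc (K:ℝ) ≤ 1/(2*d) + 1 := hKle
            _ ≤ 3/(2*r) + 1 := by linarith
            _ ≤ (1/r) * 2 := by linarith [h3]
            _ ≤ (1/r) * (2:ℝ)^(2*W/r) := by
                apply mul_le_mul_of_nonneg_left h2t2 (by positivity)
      · intro g hmono hlip hmaps
        have hmW : -W ∈ Set.Icc (-W) W := ⟨le_refl _, by linarith⟩
        have hy01 := hmaps hmW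
        rw [Set.mem_Icc] at hy01
        set y := g (-W) with hy
        set j0 := ⌊y/(2*d)⌋₊ with hj0
        set j := min (K-1) j0 with hj
        have hjK : j < K := lt_of_le_of_lt (min_le_left _ _) (by omega)
        refine ⟨fun _ => min (W + (2*(j:ℝ)+1)*d) 1,
          Finset.mem_image.2 ⟨j, Finset.mem_range.2 hjK, rfl⟩, ?_⟩
        have hynn : 0 ≤ y/(2*d) := div_nonneg hy01.1 (by positivity)
        have hykey : |y - (2*(j:ℝ)+1)*d| ≤ d := by
          by_cases hc : j0 ≤ K-1
          · have hjj : j = j0 := min_eq_right hc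
            have hfl : (j0:ℝ) * (2*d) ≤ y := by
              rw [← le_div_iff₀ (by positivity)]
              exact Nat.floor_le hynn
            have hfu : y < ((j0:ℝ) + 1) * (2*d) := by
              rw [← div_lt_iff₀ (by positivity)]
              exact Nat.lt_floor_add_one _
            rw [hjj, abs_le]
            constructor <;> linarith
          · have hjj : j = K - 1 := min_eq_left (by omega)
            have hKj0 : (K:ℝ) ≤ (j0:ℝ) := by exact_mod_cast (by omega : K ≤ j0)
            have hfl : (j0:ℝ) * (2*d) ≤ y := by
              rw [← le_div_iff₀ (by positivity)]
              exact Nat.floor_le hynn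
            have hKceil : 1/(2*d) ≤ (K:ℝ) := Nat.le_ceil _
            have h1le : (1:ℝ) ≤ (K:ℝ) * (2*d) := by
              rw [← div_le_iff₀ (by positivity)]
              exact hKceil
            have hcast : ((j:ℕ):ℝ) = (K:ℝ) - 1 := by
              rw [hjj]
              push_cast [Nat.cast_sub hK1]
              ring
            have hy2 : (K:ℝ)*(2*d) ≤ y :=
              le_trans (mul_le_mul_of_nonneg_right hKj0 (by positivity)) hfl
            rw [hcast, abs_le]
            constructor
            · linarith
            · linarith [hy01.2, h1le]
        intro x hx
        rw [Set.mem_Icc] at hx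
        have hgx01 := hmaps (Set.mem_Icc.2 hx)
        rw [Set.mem_Icc] at hgx01
        calc |g x - min (W + (2*(j:ℝ)+1)*d) 1| ≤ |g x - (W + (2*(j:ℝ)+1)*d)| :=
              clamp_abs hgx01.2
          _ ≤ |g x - (y + W)| + |(y + W) - (W + (2*(j:ℝ)+1)*d)| := abs_sub_le _ _ _
          _ ≤ W + d := by
              have hmon : y ≤ g x := hmono hmW (Set.mem_Icc.2 hx) (by linarith [hx.1])
              have hlipb : |g x - y| ≤ x + W := by
                have := hlip.dist_le_mul x (Set.mem_Icc.2 hx) (-W) hmW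
                rw [Real.dist_eq, Real.dist_eq] at this
                simpa [abs_of_nonneg (by linarith [hx.1] : (0:ℝ) ≤ x + W)] using this
              have h2W : |g x - y| ≤ 2*W := le_trans hlipb (by linarith [hx.2])
              have hb := abs_le.1 h2W
              have hfirst : |g x - (y + W)| ≤ W := by
                rw [abs_le]; constructor <;> linarith [hb.2]
              have hsecond : |(y + W) - (W + (2*(j:ℝ)+1)*d)| = |y - (2*(j:ℝ)+1)*d| := by
                congr 1; ring
              rw [hsecond]
              linarith [hykey]
          _ = r := by rw [hd]; ring
    · -- grid net
      push_neg at hsmall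
      have hu2 : (2:ℝ) ≤ 1/r := by rw [le_div_iff₀ hr]; linarith
      have ht43 : (4:ℝ)/3 < 2*W/r := by rw [lt_div_iff₀ hr]; linarith
      set t := 2*W/r with htdef
      set m := ⌈t⌉₊ with hmdef
      have hm2 : 2 ≤ m := by
        have : (1:ℕ) < ⌈t⌉₊ := Nat.lt_ceil.2 (by push_cast; linarith)
        omega
      set n := m - 1 with hndef
      have hn1 : 1 ≤ n := by omega
      have hnt : (n:ℝ) < t := Nat.lt_ceil.1 (by omega)
      have hmt : t ≤ (m:ℝ) := Nat.le_ceil t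
      have hnm : (n:ℝ) + 1 = (m:ℝ) := by
        exact_mod_cast (by omega : n + 1 = m)
      set L := ⌊1/r⌋₊ with hLdef
      have hL2 : 2 ≤ L := Nat.le_floor (by push_cast; linarith)
      have hLu : (L:ℝ) ≤ 1/r := Nat.floor_le (by positivity)
      -- the net
      set ix : ℝ → ℕ := fun x => min n ⌊(x+W)/r⌋₊ with hixdef
      set F : ℕ → Finset ℕ → ℝ → ℝ := fun a S x =>
        min (r * ((a + ((S.filter (fun j => j < ix x)).card) : ℕ) : ℝ) + r) 1 with hFdef
      set I := (Finset.range (L+1)).sigma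
        (fun a => ((Finset.range n).powerset.filter (fun S => S.card ≤ L - a))) with hIdef
      refine ⟨I.image (fun p => F p.1 p.2), ?_, ?_, ?_⟩
      · intro f hf
        simp only [Finset.mem_image] at hf
        obtain ⟨p, _, rfl⟩ := hf
        intro x _
        refine ⟨le_min (by positivity) zero_le_one, min_le_right _ _⟩
      · -- cardinality
        have hpow : ((2:ℝ)^(n:ℕ)) ≤ (2:ℝ)^t := by
          rw [← Real.rpow_natCast]
          exact Real.rpow_le_rpow_of_exponent_le one_le_two hnt.le
        have hIcard : (I.card : ℝ) = ∑ j ∈ Finset.range (L+1), (Asum n j : ℝ) := by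
          rw [hIdef, Finset.card_sigma]
          have h1 : ∀ a ∈ Finset.range (L+1),
              ((Finset.range n).powerset.filter (fun S => S.card ≤ L - a)).card
              = Asum n (L - a) := fun a _ => card_powerset_filter n (L - a)
          have h2 : ∑ a ∈ Finset.range (L+1), Asum n (L-a) = ∑ j ∈ Finset.range (L+1), Asum n j := by
            rw [← Finset.sum_range_reflect (fun j => Asum n j) (L+1)]
            apply Finset.sum_congr rfl
            intro a ha
            simp only [Finset.mem_range] at ha
            norm_num
          rw [Finset.sum_congr rfl h1, h2]
          push_cast
          rfl
        have hcard1 : ((I.image (fun p => F p.1 p.2)).card : ℝ) ≤ (I.card : ℝ) := by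
          exact_mod_cast Finset.card_image_le
        refine le_trans hcard1 ?_
        rw [hIcard]
        -- now bound the sum
        rcases eq_or_lt_of_le hn1 with hn1' | hn2
        · -- n = 1 : sum ≤ 1 + 2L ≤ (5/2)(1/r) ≤ (1/r) 2^t
          have hb := Asum_sum_le' n (L+1) (by omega)
          have hbs : (∑ j ∈ Finset.range (L+1), (Asum n j:ℝ))
              ≤ (n:ℝ) * 2^(n-1 : ℕ) + ((L+1-n : ℕ):ℝ) * 2^(n:ℕ) := by
            exact_mod_cast hb
          rw [← hn1'] at hbs ⊢
          simp only [Nat.cast_one] at hbs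
          have hL1n : ((L+1-1 : ℕ):ℝ) = (L:ℝ) := by push_cast; ring
          rw [hL1n] at hbs
          norm_num at hbs
          -- hbs : sum ≤ 1 + L * 2
          have h52 : (5:ℝ)/2 ≤ (2:ℝ)^((4:ℝ)/3) := by
            have hc2 : ((2:ℝ)^((4:ℝ)/3))^(3:ℕ) = 16 := by
              rw [← Real.rpow_natCast ((2:ℝ)^((4:ℝ)/3)) 3,
                ← Real.rpow_mul (by norm_num : (0:ℝ) ≤ 2)]
              rw [show ((4:ℝ)/3 * (3:ℕ)) = ((4:ℕ):ℝ) by push_cast; ring, Real.rpow_natCast]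
              norm_num
            have hcube : ((5:ℝ)/2)^(3:ℕ) ≤ ((2:ℝ)^((4:ℝ)/3))^(3:ℕ) := by
              rw [hc2]; norm_num
            exact le_of_pow_le_pow_left₀ (by norm_num) (by positivity) hcube
          have h2t : (2:ℝ)^((4:ℝ)/3) ≤ (2:ℝ)^t :=
            Real.rpow_le_rpow_of_exponent_le one_le_two ht43.le
          have hone : (1:ℝ) ≤ (1/2) * (1/r) := by linarith
          calc (∑ j ∈ Finset.range (L+1), (Asum 1 j:ℝ)) ≤ 1 + (L:ℝ)*2 := hbs
            _ ≤ (5/2) * (1/r) := by linarith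
            _ = (1/r) * (5/2) := by ring
            _ ≤ (1/r) * (2:ℝ)^t :=
                mul_le_mul_of_nonneg_left (le_trans h52 h2t) (by positivity)
        · -- n ≥ 2
          have hpow2 : (0:ℝ) < (2:ℝ)^(n-1:ℕ) := by positivity
          obtain ⟨k, hk⟩ : ∃ k, n = k + 1 := ⟨n - 1, by omega⟩
          have h2n : ((2:ℝ)^(n:ℕ)) = 2 * 2^(n-1:ℕ) := by
            rw [hk]
            simp [pow_succ, mul_comm]
          by_cases hcase : L + 1 ≤ n
          · have hb := Asum_sum_le n (L+1) hcase
            have hbs : (∑ j ∈ Finset.range (L+1), (Asum n j:ℝ)) ≤ ((L:ℝ)+1) * 2^(n-1:ℕ) := by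
              exact_mod_cast hb
            calc (∑ j ∈ Finset.range (L+1), (Asum n j:ℝ)) ≤ ((L:ℝ)+1) * 2^(n-1:ℕ) := hbs
              _ ≤ (2 * (1/r)) * 2^(n-1:ℕ) :=
                  mul_le_mul_of_nonneg_right (by linarith) (by positivity)
              _ = (1/r) * (2:ℝ)^(n:ℕ) := by rw [h2n]; ring
              _ ≤ (1/r) * (2:ℝ)^t := mul_le_mul_of_nonneg_left hpow (by positivity)
          · push_neg at hcase
            have hb := Asum_sum_le' n (L+1) (by omega)
            have hbs : (∑ j ∈ Finset.range (L+1), (Asum n j:ℝ))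
                ≤ (n:ℝ) * 2^(n-1 : ℕ) + ((L:ℝ)+1-(n:ℝ)) * 2^(n:ℕ) := by
              have := hb
              have hc : ((L+1-n : ℕ):ℝ) = (L:ℝ)+1-(n:ℝ) := by
                push_cast [Nat.cast_sub (by omega : n ≤ L+1)]; ring
              calc (∑ j ∈ Finset.range (L+1), (Asum n j:ℝ))
                  ≤ ((n * 2^(n-1) + (L+1-n) * 2^n : ℕ) : ℝ) := by exact_mod_cast hb
                _ = (n:ℝ) * 2^(n-1 : ℕ) + ((L:ℝ)+1-(n:ℝ)) * 2^(n:ℕ) := by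
                    push_cast [hc]; ring
            have hkey : (n:ℝ) * 2^(n-1:ℕ) + ((L:ℝ)+1-(n:ℝ)) * 2^(n:ℕ) ≤ (1/r) * 2^(n:ℕ) := by
              rw [h2n]
              have hn2' : (2:ℝ) ≤ (n:ℝ) := by exact_mod_cast hn2
              have hco : (n:ℝ) + ((L:ℝ)+1-(n:ℝ))*2 ≤ (1/r)*2 := by linarith
              calc (n:ℝ) * 2^(n-1:ℕ) + ((L:ℝ)+1-(n:ℝ)) * (2 * 2^(n-1:ℕ))
                  = ((n:ℝ) + ((L:ℝ)+1-(n:ℝ))*2) * 2^(n-1:ℕ) := by ring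
                _ ≤ ((1/r)*2) * 2^(n-1:ℕ) := mul_le_mul_of_nonneg_right hco (by positivity)
                _ = (1/r) * (2 * 2^(n-1:ℕ)) := by ring
            calc (∑ j ∈ Finset.range (L+1), (Asum n j:ℝ))
                ≤ (n:ℝ) * 2^(n-1 : ℕ) + ((L:ℝ)+1-(n:ℝ)) * 2^(n:ℕ) := hbs
              _ ≤ (1/r) * 2^(n:ℕ) := hkey
              _ ≤ (1/r) * (2:ℝ)^t := mul_le_mul_of_nonneg_left hpow (by positivity)
      · -- covering
        intro g hmono hlip hmaps
        set xi : ℕ → ℝ := fun i => -W + i*r with hxidef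
        have hxiIcc : ∀ i ≤ n, xi i ∈ Set.Icc (-W) W := by
          intro i hi
          constructor
          · simp only [hxidef]
            nlinarith [(by positivity : (0:ℝ) ≤ (i:ℝ)*r)]
          · simp only [hxidef]
            have : (i:ℝ) ≤ (n:ℝ) := by exact_mod_cast hi
            have hir : (i:ℝ)*r ≤ t*r := by nlinarith
            have htr : t*r = 2*W := by rw [htdef]; field_simp
            linarith
        set q : ℕ → ℕ := fun i => ⌊g (xi i) / r⌋₊ with hqdef
        have hstep : ∀ j < n, q j ≤ q (j+1) ∧ q (j+1) ≤ q j + 1 := by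
          intro j hj
          have hj1 : xi j ∈ Set.Icc (-W) W := hxiIcc j (by omega)
          have hj2 : xi (j+1) ∈ Set.Icc (-W) W := hxiIcc (j+1) (by omega)
          have hxile : xi j ≤ xi (j+1) := by
            simp only [hxidef]; push_cast; nlinarith
          have hmono' : g (xi j) ≤ g (xi (j+1)) := hmono hj1 hj2 hxile
          have hg0 : 0 ≤ g (xi j) := (hmaps hj1).1
          constructor
          · exact Nat.floor_le_floor (by gcongr)
          · have hlipb : g (xi (j+1)) ≤ g (xi j) + r := by
              have hdm := hlip.dist_le_mul (xi (j+1)) hj2 (xi j) hj1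
              rw [Real.dist_eq, Real.dist_eq] at hdm
              have hd : |xi (j+1) - xi j| = r := by
                simp only [hxidef]; push_cast
                rw [show (-W + ((j:ℝ)+1)*r) - (-W + (j:ℝ)*r) = r by ring]
                exact abs_of_pos hr
              rw [hd] at hdm
              have h5 := le_trans (le_abs_self _) hdm
              simp only [NNReal.coe_one, one_mul] at h5
              linarith
            have hdiv : g (xi (j+1)) / r ≤ g (xi j) / r + 1 := by
              rw [div_add' _ _ _ hr.ne']
              gcongr
              linarith
            calc q (j+1) = ⌊g (xi (j+1)) / r⌋₊ := rfl
              _ ≤ ⌊g (xi j) / r + 1⌋₊ := Nat.floor_le_floor hdiv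
              _ = ⌊g (xi j) / r⌋₊ + 1 := Nat.floor_add_one (div_nonneg hg0 hr.le)
              _ = q j + 1 := rfl
        set a := q 0 with hadef
        set S := (Finset.range n).filter (fun j => q j < q (j+1)) with hSdef
        have hq := q_step_card q n hstep
        have hSsub : S ⊆ Finset.range n := Finset.filter_subset _ _
        have hfilS : S.filter (fun j => j < n) = S := by
          apply Finset.filter_true_of_mem
          intro j hj
          exact Finset.mem_range.1 (hSsub hj)
        have hqn : q n = a + S.card := by
          have h6 := hq n le_rfl
          rwa [hfilS] at h6
        have hqnL : q n ≤ L := by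
          have hxin := hxiIcc n le_rfl
          have hg1 : g (xi n) ≤ 1 := (hmaps hxin).2
          have h7 : g (xi n) / r ≤ 1 / r := by gcongr
          exact Nat.floor_le_floor h7
        have hmem : (⟨a, S⟩ : (_ : ℕ) × Finset ℕ) ∈ I := by
          rw [hIdef, Finset.mem_sigma]
          constructor
          · apply Finset.mem_range.2
            show a < L + 1
            omega
          · rw [Finset.mem_filter, Finset.mem_powerset]
            refine ⟨hSsub, ?_⟩
            show S.card ≤ L - a
            omega
        refine ⟨F a S, Finset.mem_image.2 ⟨⟨a, S⟩, hmem, rfl⟩, ?_⟩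
        intro x hx
        have hxmem := hx
        rw [Set.mem_Icc] at hx
        have hxW : 0 ≤ (x+W)/r := div_nonneg (by linarith [hx.1]) hr.le
        have hin : ix x ≤ n := min_le_left _ _
        have hqi : q (ix x) = a + (S.filter (fun j => j < ix x)).card := hq (ix x) hin
        have hximem : xi (ix x) ∈ Set.Icc (-W) W := hxiIcc _ hin
        have hxiLe : xi (ix x) ≤ x := by
          have h2 : (ix x : ℕ) ≤ ⌊(x+W)/r⌋₊ := min_le_right _ _
          have h3 : ((ix x : ℕ):ℝ) ≤ (⌊(x+W)/r⌋₊:ℝ) := by exact_mod_cast h2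
          have h4 : (⌊(x+W)/r⌋₊ : ℝ) ≤ (x+W)/r := Nat.floor_le hxW
          have h5 : ((ix x : ℕ):ℝ) * r ≤ x + W := by
            rw [← le_div_iff₀ hr]; linarith
          simp only [hxidef]
          linarith
        have hxLe : x ≤ xi (ix x) + r := by
          have h8 : x + W ≤ (((ix x : ℕ):ℝ) + 1) * r := by
            by_cases hc : ⌊(x+W)/r⌋₊ ≤ n
            · have h9 : ix x = ⌊(x+W)/r⌋₊ := min_eq_right hc
              have h10 : (x+W)/r < (⌊(x+W)/r⌋₊:ℝ) + 1 := Nat.lt_floor_add_one _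
              rw [div_lt_iff₀ hr] at h10
              rw [h9]
              linarith
            · have h9 : ix x = n := min_eq_left (by omega)
              rw [h9]
              have h11 : 2*W = t*r := by rw [htdef]; field_simp
              have h12 : t*r ≤ (m:ℝ)*r := by nlinarith
              rw [← hnm] at h12
              linarith [hx.2]
          simp only [hxidef]
          linarith
        have hgxi0 : 0 ≤ g (xi (ix x)) := (hmaps hximem).1
        have glow : r * ((q (ix x):ℕ):ℝ) ≤ g (xi (ix x)) := by
          rw [mul_comm, ← le_div_iff₀ hr]
          exact Nat.floor_le (div_nonneg hgxi0 hr.le)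
        have ghigh : g (xi (ix x)) < r * (((q (ix x):ℕ):ℝ) + 1) := by
          rw [mul_comm, ← div_lt_iff₀ hr]
          exact Nat.lt_floor_add_one _
        have gmono : g (xi (ix x)) ≤ g x := hmono hximem hxmem hxiLe
        have glip : g x ≤ g (xi (ix x)) + r := by
          have hdm := hlip.dist_le_mul x hxmem (xi (ix x)) hximem
          rw [Real.dist_eq, Real.dist_eq] at hdm
          have hd : |x - xi (ix x)| ≤ r := by
            rw [abs_of_nonneg (by linarith)]
            linarith
          have h5 := le_trans (le_abs_self _) (le_trans hdm (by simpa using hd))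
          linarith
        have hg1x : g x ≤ 1 := (hmaps hxmem).2
        calc |g x - F a S x| = |g x - min (r * ((q (ix x):ℕ):ℝ) + r) 1| := by
              simp only [hFdef]
              rw [hqi]
          _ ≤ |g x - (r * ((q (ix x):ℕ):ℝ) + r)| := clamp_abs hg1x
          _ ≤ r := by
              rw [abs_le]
              constructor
              · linarith
              · linarith
end

section
/- Let p₁, …, pₙ ∈ ℝ and z₁, …, zₙ ∈ ℝ satisfy the LPAV constraints: 0 ≤ z_j − z_i ≤ p_j − p_i whenever p_i ≤ p_j. Let p_{(1)} ≤ … ≤ p_{(n)} be the sorted values of the p_i with z_{(i)} the corresponding z-values (well-defined, since p_i = p_j forces z_i = z_j), and define ĝ : ℝ → ℝ by ĝ(ζ) = z_{(1)} for ζ ≤ p_{(1)}, ĝ(ζ) = z_{(n)} for ζ ≥ p_{(n)}, and ĝ(μ·p_{(i)} + (1−μ)·p_{(i+1)}) = μ·z_{(i)} + (1−μ)·z_{(i+1)} for μ ∈ [0,1] and 1 ≤ i < n. Then ĝ is well-defined, monotone nondecreasing, 1-Lipschitz on all of ℝ, and satisfies ĝ(p_i) = z_i for every i. -/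
open Finset

namespace LPAVAux

variable {n : ℕ} {p z : Fin n → ℝ}

/-- Piecewise linear interpolation of the data `(p i, z i)`. -/
noncomputable def interpG (p z : Fin n → ℝ) (x : ℝ) : ℝ :=
  if h : (univ.filter fun k => p k ≤ x).Nonempty ∧ (univ.filter fun k => x ≤ p k).Nonempty then
    if (univ.filter fun k => p k ≤ x).sup' h.1 p = (univ.filter fun k => x ≤ p k).inf' h.2 p
    then (univ.filter fun k => p k ≤ x).sup' h.1 z
    else (univ.filter fun k => p k ≤ x).sup' h.1 z +
      ((univ.filter fun k => x ≤ p k).inf' h.2 z - (univ.filter fun k => p k ≤ x).sup' h.1 z) *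
        ((x - (univ.filter fun k => p k ≤ x).sup' h.1 p) /
         ((univ.filter fun k => x ≤ p k).inf' h.2 p - (univ.filter fun k => p k ≤ x).sup' h.1 p))
  else 0

section

variable (hfeas : ∀ i j : Fin n, p i ≤ p j → 0 ≤ z j - z i ∧ z j - z i ≤ p j - p i)
include hfeas

lemma zmono {i j : Fin n} (h : p i ≤ p j) : z i ≤ z j := by linarith [(hfeas i j h).1]

lemma zlip {i j : Fin n} (h : p i ≤ p j) : z j - z i ≤ p j - p i := (hfeas i j h).2

lemma zeq {i j : Fin n} (h : p i = p j) : z i = z j := by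
  have h1 := (hfeas i j h.le).1
  have h2 := (hfeas j i h.ge).1
  linarith

/-- When `a` realizes the max of `p` on `{p · ≤ x}` and `b` the min on `{x ≤ p ·}`,
`interpG` has an explicit formula. -/
lemma G_formula_eq {x : ℝ} {a b : Fin n} (ha : p a ≤ x) (hb : x ≤ p b)
    (hmax : ∀ k, p k ≤ x → p k ≤ p a) (hmin : ∀ k, x ≤ p k → p b ≤ p k)
    (hab : p a = p b) : interpG p z x = z a := by
  have hA : (univ.filter fun k => p k ≤ x).Nonempty := ⟨a, by simp [ha]⟩
  have hB : (univ.filter fun k => x ≤ p k).Nonempty := ⟨b, by simp [hb]⟩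
  have hsp : (univ.filter fun k => p k ≤ x).sup' hA p = p a := by
    refine le_antisymm (Finset.sup'_le _ _ fun k hk => hmax k (by simpa using hk))
      (Finset.le_sup' _ (by simp [ha]))
  have hip : (univ.filter fun k => x ≤ p k).inf' hB p = p b := by
    refine le_antisymm (Finset.inf'_le _ (by simp [hb]))
      (Finset.le_inf' _ _ fun k hk => hmin k (by simpa using hk))
  have hsz : (univ.filter fun k => p k ≤ x).sup' hA z = z a := by
    refine le_antisymm (Finset.sup'_le _ _ fun k hk =>
      zmono hfeas (hmax k (by simpa using hk))) (Finset.le_sup' _ (by simp [ha]))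
  rw [interpG, dif_pos ⟨hA, hB⟩]
  rw [if_pos (by rw [hsp, hip]; exact hab)]
  exact hsz

lemma G_formula_lt {x : ℝ} {a b : Fin n} (ha : p a ≤ x) (hb : x ≤ p b)
    (hmax : ∀ k, p k ≤ x → p k ≤ p a) (hmin : ∀ k, x ≤ p k → p b ≤ p k)
    (hab : p a ≠ p b) :
    interpG p z x = z a + (z b - z a) * ((x - p a) / (p b - p a)) := by
  have hA : (univ.filter fun k => p k ≤ x).Nonempty := ⟨a, by simp [ha]⟩
  have hB : (univ.filter fun k => x ≤ p k).Nonempty := ⟨b, by simp [hb]⟩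
  have hsp : (univ.filter fun k => p k ≤ x).sup' hA p = p a := by
    refine le_antisymm (Finset.sup'_le _ _ fun k hk => hmax k (by simpa using hk))
      (Finset.le_sup' _ (by simp [ha]))
  have hip : (univ.filter fun k => x ≤ p k).inf' hB p = p b := by
    refine le_antisymm (Finset.inf'_le _ (by simp [hb]))
      (Finset.le_inf' _ _ fun k hk => hmin k (by simpa using hk))
  have hsz : (univ.filter fun k => p k ≤ x).sup' hA z = z a := by
    refine le_antisymm (Finset.sup'_le _ _ fun k hk =>
      zmono hfeas (hmax k (by simpa using hk))) (Finset.le_sup' _ (by simp [ha]))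
  have hiz : (univ.filter fun k => x ≤ p k).inf' hB z = z b := by
    refine le_antisymm (Finset.inf'_le _ (by simp [hb]))
      (Finset.le_inf' _ _ fun k hk => zmono hfeas (hmin k (by simpa using hk)))
  rw [interpG, dif_pos ⟨hA, hB⟩]
  rw [if_neg (by rw [hsp, hip]; exact hab)]
  rw [hsp, hsz, hip, hiz]

lemma G_point (i : Fin n) : interpG p z (p i) = z i :=
  G_formula_eq hfeas le_rfl le_rfl (fun _ h => h) (fun _ h => h) rfl

/-- Bounds for `interpG` on a segment. -/
lemma G_bounds {x : ℝ} {a b : Fin n} (ha : p a ≤ x) (hb : x ≤ p b)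
    (hmax : ∀ k, p k ≤ x → p k ≤ p a) (hmin : ∀ k, x ≤ p k → p b ≤ p k) :
    z a ≤ interpG p z x ∧ interpG p z x ≤ z b ∧
      interpG p z x - z a ≤ x - p a ∧ z b - interpG p z x ≤ p b - x := by
  rcases eq_or_lt_of_le (ha.trans hb) with hab | hab
  · have hG := G_formula_eq hfeas ha hb hmax hmin hab
    have hz := zeq hfeas hab
    have hx : x = p a := le_antisymm (hab ▸ hb) ha
    refine ⟨by rw [hG], by rw [hG, hz], by rw [hG]; linarith, by rw [hG, hz]; linarith⟩
  · have hG := G_formula_lt hfeas ha hb hmax hmin hab.ne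
    have hd : (0:ℝ) < p b - p a := by linarith
    have hz1 : 0 ≤ z b - z a := (hfeas a b (ha.trans hb)).1
    have hz2 : z b - z a ≤ p b - p a := (hfeas a b (ha.trans hb)).2
    set μ := (x - p a) / (p b - p a) with hμdef
    have hμ0 : 0 ≤ μ := div_nonneg (by linarith) hd.le
    have hμ1 : μ ≤ 1 := (div_le_one hd).mpr (by linarith)
    have hμd : μ * (p b - p a) = x - p a := div_mul_cancel₀ _ hd.ne'
    rw [hG]
    refine ⟨by nlinarith, by nlinarith, by nlinarith, by nlinarith⟩

/-- Main monotonicity + Lipschitz estimate. -/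
lemma G_main {x y : ℝ} (hxy : x ≤ y)
    (hlx : ∃ i, p i ≤ x) (hhy : ∃ i, y ≤ p i) :
    0 ≤ interpG p z y - interpG p z x ∧ interpG p z y - interpG p z x ≤ y - x := by
  obtain ⟨i0, hi0⟩ := hlx
  obtain ⟨i1, hi1⟩ := hhy
  have hAx : (univ.filter fun k => p k ≤ x).Nonempty := ⟨i0, by simp [hi0]⟩
  have hBx : (univ.filter fun k => x ≤ p k).Nonempty := ⟨i1, by simp [hxy.trans hi1]⟩
  have hAy : (univ.filter fun k => p k ≤ y).Nonempty := ⟨i0, by simp [hi0.trans hxy]⟩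
  have hBy : (univ.filter fun k => y ≤ p k).Nonempty := ⟨i1, by simp [hi1]⟩
  obtain ⟨a, haA, hpa⟩ := Finset.exists_mem_eq_sup' hAx p
  obtain ⟨b, hbB, hpb⟩ := Finset.exists_mem_eq_inf' hBx p
  obtain ⟨a', haA', hpa'⟩ := Finset.exists_mem_eq_sup' hAy p
  obtain ⟨b', hbB', hpb'⟩ := Finset.exists_mem_eq_inf' hBy p
  have ha : p a ≤ x := (mem_filter.mp haA).2
  have hb : x ≤ p b := (mem_filter.mp hbB).2
  have ha' : p a' ≤ y := (mem_filter.mp haA').2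
  have hb' : y ≤ p b' := (mem_filter.mp hbB').2
  have hmax : ∀ k, p k ≤ x → p k ≤ p a := fun k hk => hpa ▸ Finset.le_sup' p (by simp [hk])
  have hmin : ∀ k, x ≤ p k → p b ≤ p k := fun k hk => hpb ▸ Finset.inf'_le p (by simp [hk])
  have hmax' : ∀ k, p k ≤ y → p k ≤ p a' := fun k hk => hpa' ▸ Finset.le_sup' p (by simp [hk])
  have hmin' : ∀ k, y ≤ p k → p b' ≤ p k := fun k hk => hpb' ▸ Finset.inf'_le p (by simp [hk])
  rcases le_or_gt (p b) y with hc | hc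
  · -- there is a data point between x and y
    obtain ⟨h1, h2, h3, h4⟩ := G_bounds hfeas ha hb hmax hmin
    obtain ⟨h1', h2', h3', h4'⟩ := G_bounds hfeas ha' hb' hmax' hmin'
    have hba' : p b ≤ p a' := hmax' b hc
    have hz1 : z b ≤ z a' := zmono hfeas hba'
    have hz2 : z a' - z b ≤ p a' - p b := (hfeas b a' hba').2
    constructor <;> linarith
  · -- same segment
    have hmaxy : ∀ k, p k ≤ y → p k ≤ p a := by
      intro k hk
      rcases le_or_gt (p k) x with h | h
      · exact hmax k h
      · exact absurd (hmin k h.le) (by linarith)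
    have hminy : ∀ k, y ≤ p k → p b ≤ p k := fun k hk => hmin k (hxy.trans hk)
    rcases eq_or_lt_of_le (ha.trans hb) with hab | hab
    · have hGx := G_formula_eq hfeas ha hb hmax hmin hab
      have hGy := G_formula_eq hfeas (ha.trans hxy) hc.le hmaxy hminy hab
      rw [hGx, hGy]
      constructor <;> linarith
    · have hGx := G_formula_lt hfeas ha hb hmax hmin hab.ne
      have hGy := G_formula_lt hfeas (ha.trans hxy) hc.le hmaxy hminy hab.ne
      have hd : (0:ℝ) < p b - p a := by linarith
      have hz1 : 0 ≤ z b - z a := (hfeas a b (ha.trans hb)).1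
      have hz2 : z b - z a ≤ p b - p a := (hfeas a b (ha.trans hb)).2
      rw [hGx, hGy]
      have key : (y - p a) / (p b - p a) - (x - p a) / (p b - p a) = (y - x) / (p b - p a) := by
        field_simp
        ring
      have h0 : 0 ≤ (y - x) / (p b - p a) := div_nonneg (by linarith) hd.le
      have h1 : (y - x) / (p b - p a) * (p b - p a) = y - x := div_mul_cancel₀ _ hd.ne'
      constructor <;> nlinarith

end

end LPAVAux

/-- given LPAV-feasible values (0 ≤ z_j − z_i ≤ p_j − p_i whenever
p_i ≤ p_j), the piecewise linear interpolation — constant to the left of the smallest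
p, constant to the right of the largest p, and affine between consecutive sorted p's —
gives a well-defined, monotone nondecreasing, 1-Lipschitz function ĝ : ℝ → ℝ with
ĝ(p_i) = z_i for every i. -/
theorem lpav_interpolation
    (n : ℕ) (hn : 0 < n) (p z : Fin n → ℝ)
    (hfeas : ∀ i j : Fin n, p i ≤ p j → 0 ≤ z j - z i ∧ z j - z i ≤ p j - p i) :
    ∃ ghat : ℝ → ℝ,
      Monotone ghat ∧
      LipschitzWith 1 ghat ∧
      (∀ i, ghat (p i) = z i) ∧
      -- constant at the value of the smallest p to the left of it
      (∀ (i : Fin n), (∀ j, p i ≤ p j) → ∀ ζ : ℝ, ζ ≤ p i → ghat ζ = z i) ∧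
      -- constant at the value of the largest p to the right of it
      (∀ (i : Fin n), (∀ j, p j ≤ p i) → ∀ ζ : ℝ, p i ≤ ζ → ghat ζ = z i) ∧
      -- linear interpolation between consecutive sorted values
      (∀ (i j : Fin n), p i ≤ p j → (∀ k, p k ≤ p i ∨ p j ≤ p k) →
        ∀ μ ∈ Set.Icc (0 : ℝ) 1,
          ghat (μ * p i + (1 - μ) * p j) = μ * z i + (1 - μ) * z j) := by
  haveI : Nonempty (Fin n) := Fin.pos_iff_nonempty.mp hn
  obtain ⟨im, him⟩ := Finite.exists_min p
  obtain ⟨iM, hiM⟩ := Finite.exists_max p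
  set lo := p im with hlo
  set hi := p iM with hhi
  have hlohi : lo ≤ hi := him iM
  set c : ℝ → ℝ := fun t => max lo (min t hi) with hc
  have hc_lo : ∀ t, lo ≤ c t := fun t => le_max_left _ _
  have hc_hi : ∀ t, c t ≤ hi := fun t => max_le hlohi (min_le_right _ _)
  have hc_id : ∀ t, lo ≤ t → t ≤ hi → c t = t := by
    intro t h1 h2
    simp only [hc]
    rw [min_eq_left h2, max_eq_right h1]
  have hc_mono : ∀ x y : ℝ, x ≤ y → c x ≤ c y := by
    intro x y h
    exact max_le_max le_rfl (min_le_min h le_rfl)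
  have hc_lip : ∀ x y : ℝ, x ≤ y → c y - c x ≤ y - x := by
    intro x y h
    have hmin1 : min x hi ≤ min y hi := min_le_min h le_rfl
    have hmin2 : min y hi - min x hi ≤ y - x := by
      rcases min_cases x hi with ⟨e1, f1⟩ | ⟨e1, f1⟩ <;>
        rcases min_cases y hi with ⟨e2, f2⟩ | ⟨e2, f2⟩ <;> linarith
    show max lo (min y hi) - max lo (min x hi) ≤ y - x
    rcases max_cases lo (min x hi) with ⟨e1, f1⟩ | ⟨e1, f1⟩ <;>
      rcases max_cases lo (min y hi) with ⟨e2, f2⟩ | ⟨e2, f2⟩ <;> linarith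
  set g : ℝ → ℝ := fun t => LPAVAux.interpG p z (c t) with hg
  have hexlo : ∀ t, ∃ i, p i ≤ c t := fun t => ⟨im, hc_lo t⟩
  have hexhi : ∀ t, ∃ i, c t ≤ p i := fun t => ⟨iM, hc_hi t⟩
  have key : ∀ x y : ℝ, x ≤ y → g x ≤ g y ∧ g y - g x ≤ y - x := by
    intro x y h
    have := LPAVAux.G_main hfeas (hc_mono x y h) (hexlo x) (hexhi y)
    have := hc_lip x y h
    constructor <;> [linarith; linarith]
  have hgpoint : ∀ i, g (p i) = z i := by
    intro i
    simp only [hg]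
    rw [hc_id (p i) (him i) (hiM i)]
    exact LPAVAux.G_point hfeas i
  refine ⟨g, ?_, ?_, hgpoint, ?_, ?_, ?_⟩
  · exact fun x y h => (key x y h).1
  · apply LipschitzWith.of_dist_le_mul
    intro x y
    rw [Real.dist_eq, Real.dist_eq, NNReal.coe_one, one_mul]
    rcases le_total x y with h | h
    · obtain ⟨h1, h2⟩ := key x y h
      rw [abs_of_nonpos (by linarith), abs_of_nonpos (by linarith)]
      linarith
    · obtain ⟨h1, h2⟩ := key y x h
      rw [abs_of_nonneg (by linarith), abs_of_nonneg (by linarith)]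
      linarith
  · -- left constant
    intro i hmin ζ hζ
    have hloeq : lo = p i := le_antisymm (him i) (hmin im)
    have hcζ : c ζ = p i := by
      simp only [hc]
      rw [max_eq_left (by rw [hloeq]; exact (min_le_left _ _).trans hζ), hloeq]
    simp only [hg]
    rw [hcζ]
    exact LPAVAux.G_point hfeas i
  · -- right constant
    intro i hmax ζ hζ
    have hhieq : hi = p i := le_antisymm (hmax iM) (hiM i)
    have hcζ : c ζ = p i := by
      simp only [hc]
      rw [min_eq_right (by rw [hhieq]; exact hζ), hhieq, max_eq_right (him i)]
    simp only [hg]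
    rw [hcζ]
    exact LPAVAux.G_point hfeas i
  · -- interpolation
    intro i j hij hgap μ hμ
    obtain ⟨hμ0, hμ1⟩ := hμ
    set x := μ * p i + (1 - μ) * p j with hx
    have hx1 : p i ≤ x := by nlinarith
    have hx2 : x ≤ p j := by nlinarith
    have hcx : c x = x := hc_id x ((him i).trans hx1) (hx2.trans (hiM j))
    simp only [hg]
    rw [hcx]
    rcases eq_or_lt_of_le hij with heq | hlt
    · have hxi : x = p i := by rw [hx, ← heq]; ring
      rw [hxi, LPAVAux.G_point hfeas i, LPAVAux.zeq hfeas heq]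
      ring
    · rcases eq_or_lt_of_le hμ0 with h0 | h0
      · have hxj : x = p j := by rw [hx, ← h0]; ring
        rw [hxj, LPAVAux.G_point hfeas j, ← h0]
        ring
      · rcases eq_or_lt_of_le hμ1 with h1 | h1
        · have hxi : x = p i := by rw [hx, h1]; ring
          rw [hxi, LPAVAux.G_point hfeas i, h1]
          ring
        · have hxlt1 : p i < x := by nlinarith
          have hxlt2 : x < p j := by nlinarith
          have hmaxseg : ∀ k, p k ≤ x → p k ≤ p i := by
            intro k hk
            rcases hgap k with h | h
            · exact h
            · linarith
          have hminseg : ∀ k, x ≤ p k → p j ≤ p k := by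
            intro k hk
            rcases hgap k with h | h
            · linarith
            · exact h
          rw [LPAVAux.G_formula_lt hfeas hx1 hx2 hmaxseg hminseg hlt.ne]
          have hxpi : x - p i = (1 - μ) * (p j - p i) := by rw [hx]; ring
          rw [hxpi, mul_div_assoc, div_self (by linarith), mul_one]
          ring
end
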